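/- arXiv:1007.4150 — 4 statements merged into one kernel-verified Lean document; each statement's English description precedes it below -/
import Mathlib

section
/- cp(21, 3) = 77; that is, the minimum number of proper subsets A_1, ..., A_t ⊊ [21] such that every 3-element subset of [21] is contained in exactly one A_i equals 77. -/
set_option maxRecDepth 1000000
set_option maxHeartbeats 8000000

/-- A clique partition of the `r`-element subsets of `[n]`: a collection of
proper subsets of `[n]` such that every `r`-element subset is contained in
exactly one member. -/
def IsCliquePartition (n r : ℕ) (P : Finset (Finset (Fin n))) : Prop :=
  (∀ A ∈ P, A ≠ Finset.univ) ∧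
  ∀ S : Finset (Fin n), S.card = r → ∃! A, A ∈ P ∧ S ⊆ A

/-- `cp n r` is the minimum size of a clique partition of the `r`-subsets of `[n]`. -/
noncomputable def cp (n r : ℕ) : ℕ :=
  sInf {t | ∃ P : Finset (Finset (Fin n)), IsCliquePartition n r P ∧ P.card = t}

/-- Generalized binomial coefficient `C(x, r) = x(x-1)⋯(x-r+1)/r!` for real `x`. -/
noncomputable def rbinom (x : ℝ) (r : ℕ) : ℝ :=
  (∏ i ∈ Finset.range r, (x - i)) / (Nat.factorial r)

namespace CP21

open Finset

abbrev F := Fin 21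

/-- blocks of size ≥ 3 -/
def Qb (P : Finset (Finset F)) : Finset (Finset F) := P.filter (fun A => 3 ≤ A.card)

/-- blocks of size ≥ 3 through a pair -/
def Qp (P : Finset (Finset F)) (p : Finset F) : Finset (Finset F) :=
  (Qb P).filter (fun A => p ⊆ A)

/-- weight -/
def w (a : ℕ) : ℚ := ((a.choose 2 : ℕ) : ℚ)⁻¹

def pairs : Finset (Finset F) := (univ : Finset F).powersetCard 2

variable {P : Finset (Finset F)}

lemma pairs_card : pairs.card = 210 := by
  rw [pairs, Finset.card_powersetCard]; decide

lemma mem_Qp {p A : Finset F} : A ∈ Qp P p ↔ (A ∈ P ∧ 3 ≤ A.card) ∧ p ⊆ A := by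
  simp [Qp, Qb, Finset.mem_filter, and_assoc]

section

variable (hP : IsCliquePartition 21 3 P)
include hP

lemma cover {p : Finset F} (hp : p.card = 2) {z : F} (hz : z ∉ p) :
    ∃ A ∈ Qp P p, z ∈ A := by
  have hcard : (insert z p).card = 3 := by
    rw [Finset.card_insert_of_notMem hz, hp]
  obtain ⟨A, ⟨hAP, hsub⟩, -⟩ := hP.2 _ hcard
  refine ⟨A, mem_Qp.2 ⟨⟨hAP, ?_⟩, ?_⟩, ?_⟩
  · calc 3 = (insert z p).card := hcard.symm
      _ ≤ A.card := Finset.card_le_card hsub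
  · exact (Finset.subset_insert _ _).trans hsub
  · exact hsub (Finset.mem_insert_self _ _)

lemma unique_block {p : Finset F} (hp : p.card = 2) {z : F} (hz : z ∉ p)
    {A B : Finset F} (hA : A ∈ Qp P p) (hB : B ∈ Qp P p) (hzA : z ∈ A) (hzB : z ∈ B) :
    A = B := by
  have hcard : (insert z p).card = 3 := by
    rw [Finset.card_insert_of_notMem hz, hp]
  obtain ⟨C, -, hC⟩ := hP.2 _ hcard
  rw [mem_Qp] at hA hB
  have h1 : A = C := hC _ ⟨hA.1.1, Finset.insert_subset hzA hA.2⟩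
  have h2 : B = C := hC _ ⟨hB.1.1, Finset.insert_subset hzB hB.2⟩
  rw [h1, h2]

lemma biUnion_eq {p : Finset F} (hp : p.card = 2) :
    (Qp P p).biUnion (fun A => A \ p) = univ \ p := by
  ext z
  simp only [Finset.mem_biUnion, Finset.mem_sdiff, Finset.mem_univ, true_and]
  constructor
  · rintro ⟨A, hA, hzA, hzp⟩; exact hzp
  · intro hz
    obtain ⟨A, hA, hzA⟩ := cover hP hp hz
    exact ⟨A, hA, hzA, hz⟩

lemma sum19 {p : Finset F} (hp : p.card = 2) :
    ∑ A ∈ Qp P p, (A.card - 2) = 19 := by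
  have hdisj : ∀ A ∈ Qp P p, ∀ B ∈ Qp P p, A ≠ B → Disjoint (A \ p) (B \ p) := by
    intro A hA B hB hne
    rw [Finset.disjoint_left]
    intro z hzA hzB
    rw [Finset.mem_sdiff] at hzA hzB
    exact hne (unique_block hP hp hzA.2 hA hB hzA.1 hzB.1)
  have h1 : ∑ A ∈ Qp P p, (A \ p).card = 19 := by
    rw [← Finset.card_biUnion hdisj, biUnion_eq hP hp,
      Finset.card_sdiff_of_subset (Finset.subset_univ _), hp]
    simp
  rw [← h1]
  apply Finset.sum_congr rfl
  intro A hA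
  rw [Finset.card_sdiff_of_subset (mem_Qp.1 hA).2, hp]

lemma sum19Q {p : Finset F} (hp : p.card = 2) :
    ∑ A ∈ Qp P p, ((A.card : ℚ) - 2) = 19 := by
  have h := sum19 hP hp
  have : ∀ A ∈ Qp P p, ((A.card : ℚ) - 2) = ((A.card - 2 : ℕ) : ℚ) := by
    intro A hA
    have h3 : 3 ≤ A.card := (mem_Qp.1 hA).1.2
    have : (2:ℕ) ≤ A.card := by omega
    push_cast [Nat.cast_sub this]
    ring
  rw [Finset.sum_congr rfl this, ← Nat.cast_sum, h]
  norm_num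

lemma inter_le_two {A B : Finset F} (hA : A ∈ P) (hB : B ∈ P) (hne : A ≠ B) :
    (A ∩ B).card ≤ 2 := by
  by_contra h
  push_neg at h
  obtain ⟨S, hS, hScard⟩ := Finset.exists_subset_card_eq (show 3 ≤ (A ∩ B).card by omega)
  obtain ⟨C, -, hC⟩ := hP.2 S hScard
  have h1 : A = C := hC _ ⟨hA, hS.trans Finset.inter_subset_left⟩
  have h2 : B = C := hC _ ⟨hB, hS.trans Finset.inter_subset_right⟩
  exact hne (h1.trans h2.symm)

end

lemma card_Qb_eq :
    ((Qb P).card : ℚ) = ∑ p ∈ pairs, ∑ A ∈ Qp P p, w A.card := by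
  have step1 : ∀ p, ∑ A ∈ Qp P p, w A.card
      = ∑ A ∈ Qb P, if p ⊆ A then w A.card else 0 := by
    intro p
    rw [Qp, Finset.sum_filter]
  simp_rw [step1]
  rw [Finset.sum_comm]
  have step2 : ∀ A ∈ Qb P, (∑ p ∈ pairs, if p ⊆ A then w A.card else 0) = 1 := by
    intro A hA
    have h3 : 3 ≤ A.card := (Finset.mem_filter.1 hA).2
    rw [← Finset.sum_filter]
    have hfil : pairs.filter (fun p => p ⊆ A) = A.powersetCard 2 := by
      ext p
      simp only [pairs, Finset.mem_filter, Finset.mem_powersetCard, Finset.subset_univ,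
        true_and]
      tauto
    rw [hfil, Finset.sum_const, Finset.card_powersetCard, nsmul_eq_mul, w]
    have hpos : 0 < A.card.choose 2 := Nat.choose_pos (by omega)
    field_simp
  rw [Finset.sum_congr rfl step2, Finset.sum_const, nsmul_eq_mul, mul_one]

lemma w_nonneg (a : ℕ) : 0 ≤ w a := by
  unfold w; positivity

lemma cert1 {a : ℕ} (h : 3 ≤ a) : 1/5 - ((a:ℚ) - 2)/30 ≤ w a := by
  rcases le_or_gt a 7 with h7 | h7
  · interval_cases a <;> norm_num [w, Nat.choose]
  · have : (8:ℚ) ≤ (a:ℚ) := by exact_mod_cast h7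
    have : 1/5 - ((a:ℚ) - 2)/30 ≤ 0 := by linarith
    linarith [w_nonneg a]

lemma cert2 {a : ℕ} (h : 3 ≤ a) : 1/7 - 2*((a:ℚ) - 2)/105 ≤ w a := by
  rcases le_or_gt a 9 with h9 | h9
  · interval_cases a <;> norm_num [w, Nat.choose]
  · have : (10:ℚ) ≤ (a:ℚ) := by exact_mod_cast h9
    have : 1/7 - 2*((a:ℚ) - 2)/105 ≤ 0 := by linarith
    linarith [w_nonneg a]


section
variable (hP : IsCliquePartition 21 3 P)
include hP

lemma fb1 {p : Finset F} (hp : p.card = 2) :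
    ((Qp P p).card : ℚ)/5 - 19/30 ≤ ∑ A ∈ Qp P p, w A.card := by
  calc ((Qp P p).card : ℚ)/5 - 19/30
      = ∑ A ∈ Qp P p, (1/5 - ((A.card:ℚ) - 2)/30) := by
        rw [Finset.sum_sub_distrib, Finset.sum_const, ← Finset.sum_div, sum19Q hP hp]
        push_cast; ring
    _ ≤ _ := Finset.sum_le_sum (fun A hA => cert1 (mem_Qp.1 hA).1.2)

lemma fb2 {p : Finset F} (hp : p.card = 2) :
    ((Qp P p).card : ℚ)/7 - 38/105 ≤ ∑ A ∈ Qp P p, w A.card := by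
  calc ((Qp P p).card : ℚ)/7 - 38/105
      = ∑ A ∈ Qp P p, (1/7 - 2*((A.card:ℚ) - 2)/105) := by
        rw [Finset.sum_sub_distrib, Finset.sum_const]
        have : ∑ A ∈ Qp P p, 2*((A.card:ℚ) - 2)/105
            = (∑ A ∈ Qp P p, ((A.card:ℚ) - 2)) * (2/105) := by
          rw [Finset.sum_mul]
          apply Finset.sum_congr rfl; intro A _; ring
        rw [this, sum19Q hP hp]
        push_cast; ring
    _ ≤ _ := Finset.sum_le_sum (fun A hA => cert2 (mem_Qp.1 hA).1.2)

lemma kgen {p : Finset F} (hp : p.card = 2) {M : ℕ}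
    (hM : ∀ A ∈ Qb P, A.card ≤ M) :
    19 ≤ (Qp P p).card * (M - 2) := by
  have h := sum19 hP hp
  have hle : ∑ A ∈ Qp P p, (A.card - 2) ≤ ∑ _A ∈ Qp P p, (M - 2) :=
    Finset.sum_le_sum (fun A hA => by
      have h1 := hM A (Finset.mem_filter.1 hA).1
      omega)
  rw [h] at hle
  simpa [Finset.sum_const, smul_eq_mul] using hle

lemma kside {p : Finset F} (hp : p.card = 2) {A₀ : Finset F} (hA₀ : A₀ ∈ Qb P)
    (hone : (p ∩ A₀).card = 1) :
    A₀.card - 1 ≤ (Qp P p).card := by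
  have hA₀P : A₀ ∈ P := (Finset.mem_filter.1 hA₀).1
  obtain ⟨x, hx⟩ := Finset.card_eq_one.1 hone
  have hxp : x ∈ p := (Finset.mem_inter.1 (hx ▸ Finset.mem_singleton_self x)).1
  have hxA₀ : x ∈ A₀ := (Finset.mem_inter.1 (hx ▸ Finset.mem_singleton_self x)).2
  have hcount : ∀ A ∈ Qp P p, (A ∩ (A₀ \ p)).card ≤ 1 := by
    intro A hA
    have hAP : A ∈ P := (mem_Qp.1 hA).1.1
    have hpA : p ⊆ A := (mem_Qp.1 hA).2
    have hne : A ≠ A₀ := by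
      intro h
      rw [h] at hpA
      have : p ∩ A₀ = p := Finset.inter_eq_left.2 hpA
      rw [this] at hone; omega
    have h2 : (A ∩ A₀).card ≤ 2 := inter_le_two hP hAP hA₀P hne
    have hxAA : x ∈ A ∩ A₀ := Finset.mem_inter.2 ⟨hpA hxp, hxA₀⟩
    have hsub : A ∩ (A₀ \ p) ⊆ (A ∩ A₀).erase x := by
      intro z hz
      simp only [Finset.mem_inter, Finset.mem_sdiff] at hz
      refine Finset.mem_erase.2 ⟨fun h => hz.2.2 (h ▸ hxp), Finset.mem_inter.2 ⟨hz.1, hz.2.1⟩⟩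
    calc (A ∩ (A₀ \ p)).card ≤ ((A ∩ A₀).erase x).card := Finset.card_le_card hsub
      _ = (A ∩ A₀).card - 1 := Finset.card_erase_of_mem hxAA
      _ ≤ 1 := by omega
  have hsub : A₀ \ p ⊆ (Qp P p).biUnion (fun A => A ∩ (A₀ \ p)) := by
    intro z hz
    have hzp : z ∉ p := (Finset.mem_sdiff.1 hz).2
    obtain ⟨A, hA, hzA⟩ := cover hP hp hzp
    exact Finset.mem_biUnion.2 ⟨A, hA, Finset.mem_inter.2 ⟨hzA, hz⟩⟩
  have h1 : (A₀ \ p).card ≤ ∑ A ∈ Qp P p, (A ∩ (A₀ \ p)).card :=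
    le_trans (Finset.card_le_card hsub) (Finset.card_biUnion_le)
  have h2 : ∑ A ∈ Qp P p, (A ∩ (A₀ \ p)).card ≤ (Qp P p).card :=
    by simpa using Finset.sum_le_sum hcount
  have h3 : (A₀ \ p).card + (A₀ ∩ p).card = A₀.card := Finset.card_sdiff_add_card_inter _ _
  have h4 : (A₀ ∩ p).card = 1 := by rw [Finset.inter_comm]; exact hone
  omega

lemma block_small_side {p : Finset F} (hp : p.card = 2) {A₀ : Finset F} (hA₀ : A₀ ∈ P)
    (hone : (p ∩ A₀).card = 1) {A : Finset F} (hA : A ∈ Qp P p) :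
    A.card + A₀.card ≤ 23 := by
  have hAP : A ∈ P := (mem_Qp.1 hA).1.1
  have hpA : p ⊆ A := (mem_Qp.1 hA).2
  have hne : A ≠ A₀ := by
    intro h
    rw [h] at hpA
    have : p ∩ A₀ = p := Finset.inter_eq_left.2 hpA
    rw [this, hp] at hone; omega
  have h2 : (A ∩ A₀).card ≤ 2 := inter_le_two hP hAP hA₀ hne
  have h3 : (A ∩ A₀).card + (A \ A₀).card = A.card := Finset.card_inter_add_card_sdiff _ _
  have h4 : (A \ A₀).card ≤ (univ \ A₀).card :=
    Finset.card_le_card (fun z hz => Finset.mem_sdiff.2 ⟨Finset.mem_univ _, (Finset.mem_sdiff.1 hz).2⟩)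
  have h5 : (univ \ A₀).card = 21 - A₀.card := by
    rw [Finset.card_sdiff_of_subset (Finset.subset_univ _)]; simp
  have h6 : A₀.card ≤ 21 := by
    have := Finset.card_le_card (Finset.subset_univ A₀); simpa using this
  omega

end

lemma side_count (A₀ : Finset F) :
    A₀.card * (21 - A₀.card) ≤ (pairs.filter (fun p => (p ∩ A₀).card = 1)).card := by
  classical
  have hmaps : ∀ z ∈ A₀ ×ˢ ((univ : Finset F) \ A₀),
      (fun z : F × F => ({z.1, z.2} : Finset F)) z ∈ pairs.filter (fun p => (p ∩ A₀).card = 1) := by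
    rintro ⟨x, y⟩ hz
    simp only [Finset.mem_product, Finset.mem_sdiff, Finset.mem_univ, true_and] at hz
    obtain ⟨hx, hy⟩ := hz
    have hxy : x ≠ y := fun h => hy (h ▸ hx)
    refine Finset.mem_filter.2 ⟨Finset.mem_powersetCard.2 ⟨Finset.subset_univ _, Finset.card_pair hxy⟩, ?_⟩
    have : ({x, y} : Finset F) ∩ A₀ = {x} := by
      ext z
      simp only [Finset.mem_inter, Finset.mem_insert, Finset.mem_singleton]
      constructor
      · rintro ⟨rfl | rfl, hz⟩
        · rfl
        · exact absurd hz hy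
      · rintro rfl; exact ⟨Or.inl rfl, hx⟩
    rw [this, Finset.card_singleton]
  have hinj : Set.InjOn (fun z : F × F => ({z.1, z.2} : Finset F))
      ↑(A₀ ×ˢ ((univ : Finset F) \ A₀)) := by
    rintro ⟨x, y⟩ hz ⟨x', y'⟩ hz' heq
    simp only [Finset.coe_product, Set.mem_prod, Finset.mem_coe, Finset.mem_sdiff,
      Finset.mem_univ, true_and] at hz hz'
    have hx := hz.1; have hy := hz.2; have hx' := hz'.1; have hy' := hz'.2
    simp only at heq
    have hmx : x ∈ ({x', y'} : Finset F) := heq ▸ Finset.mem_insert_self x {y}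
    have hmy : y ∈ ({x', y'} : Finset F) := heq ▸ (Finset.mem_insert.2 (Or.inr (Finset.mem_singleton_self y)))
    simp only [Finset.mem_insert, Finset.mem_singleton] at hmx hmy
    have hxx' : x = x' := by
      rcases hmx with h | h
      · exact h
      · exact absurd (h ▸ hx) hy'
    have hyy' : y = y' := by
      rcases hmy with h | h
      · exact absurd (h ▸ hx') hy
      · exact h
    simp [hxx', hyy']
  have key := Finset.card_le_card_of_injOn _ hmaps hinj
  calc A₀.card * (21 - A₀.card) = (A₀ ×ˢ ((univ : Finset F) \ A₀)).card := by
        rw [Finset.card_product, Finset.card_sdiff_of_subset (Finset.subset_univ _)]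
        simp
    _ ≤ _ := key

lemma w_anti {a b : ℕ} (h2 : 2 ≤ a) (hab : a ≤ b) : w b ≤ w a := by
  unfold w
  apply inv_anti₀
  · exact_mod_cast Nat.choose_pos h2
  · exact_mod_cast Nat.choose_le_choose 2 hab

lemma numeric3 (M : ℕ) (h8 : 8 ≤ M) (h17 : M ≤ 17) :
    (77:ℚ) ≤ ((M*(21-M) : ℕ) : ℚ) * (((M:ℚ)-1)/5 - 19/30)
      + ((210 - M*(21-M) : ℕ) : ℚ) * (19/(5*((M:ℚ)-2)) - 19/30) := by
  interval_cases M <;> norm_num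

theorem lower_bound (hP : IsCliquePartition 21 3 P) : 77 ≤ P.card := by
  classical
  have h012 : ({0,1,2} : Finset F).card = 3 := by decide
  obtain ⟨A1, ⟨hA1P, hA1sub⟩, -⟩ := hP.2 _ h012
  have hA1Q : A1 ∈ Qb P := Finset.mem_filter.2 ⟨hA1P, by
    have := Finset.card_le_card hA1sub; rw [h012] at this; exact this⟩
  obtain ⟨A₀, hA₀, hmax⟩ := Finset.exists_max_image (Qb P) Finset.card ⟨A1, hA1Q⟩
  have hA₀P : A₀ ∈ P := (Finset.mem_filter.1 hA₀).1
  have hM3 : 3 ≤ A₀.card := (Finset.mem_filter.1 hA₀).2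
  have hM20 : A₀.card ≤ 20 := by
    have hne : A₀ ≠ univ := hP.1 A₀ hA₀P
    have hlt := Finset.card_lt_card ((Finset.ssubset_iff_subset_ne).2 ⟨Finset.subset_univ _, hne⟩)
    rw [Finset.card_univ] at hlt
    simp only [Fintype.card_fin] at hlt
    omega
  set SP := pairs.filter (fun p => (p ∩ A₀).card = 1) with hSPdef
  have hSPcount : A₀.card * (21 - A₀.card) ≤ SP.card := side_count A₀
  have hSPle : SP.card ≤ 210 := by
    rw [← pairs_card]; exact Finset.card_filter_le _ _
  have hSPsub : ∀ p ∈ SP, p ∈ pairs := fun p hp => Finset.mem_filter.1 hp |>.1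
  have hpcard : ∀ p ∈ pairs, p.card = 2 := fun p hp => (Finset.mem_powersetCard.1 hp).2
  have hQmax : ∀ p : Finset F, ∀ A ∈ Qp P p, A.card ≤ A₀.card := by
    intro p A hA
    exact hmax A (Finset.mem_filter.1 hA).1
  suffices h : (77:ℚ) ≤ ((Qb P).card : ℚ) by
    have h1 : 77 ≤ (Qb P).card := by exact_mod_cast h
    exact le_trans h1 (Finset.card_filter_le _ _)
  rw [card_Qb_eq]
  -- glue lemma
  have glue : ∀ B b : ℚ, ∀ NS : ℕ, b ≤ B → (NS : ℕ) ≤ SP.card →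
      (∀ p ∈ SP, B ≤ ∑ A ∈ Qp P p, w A.card) →
      (∀ p ∈ pairs, b ≤ ∑ A ∈ Qp P p, w A.card) →
      (NS:ℚ) * B + (210 - (NS:ℚ)) * b ≤ ∑ p ∈ pairs, ∑ A ∈ Qp P p, w A.card := by
    intro B b NS hbB hNS hside hall
    have hsplit := Finset.sum_filter_add_sum_filter_not pairs (fun p => (p ∩ A₀).card = 1)
      (fun p => ∑ A ∈ Qp P p, w A.card)
    have h1 : (SP.card : ℚ) * B ≤ ∑ p ∈ SP, ∑ A ∈ Qp P p, w A.card := by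
      calc (SP.card : ℚ) * B = ∑ _p ∈ SP, B := by rw [Finset.sum_const, nsmul_eq_mul]
        _ ≤ _ := Finset.sum_le_sum hside
    have hrestcard : (pairs.filter (fun p => ¬ (p ∩ A₀).card = 1)).card = 210 - SP.card := by
      have := Finset.card_filter_add_card_filter_not
        (s := pairs) (p := fun p => (p ∩ A₀).card = 1)
      rw [pairs_card, ← hSPdef] at this
      omega
    have h2 : ((210 - SP.card : ℕ) : ℚ) * b
        ≤ ∑ p ∈ pairs.filter (fun p => ¬ (p ∩ A₀).card = 1), ∑ A ∈ Qp P p, w A.card := by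
      calc ((210 - SP.card : ℕ) : ℚ) * b
          = ∑ _p ∈ pairs.filter (fun p => ¬ (p ∩ A₀).card = 1), b := by
            rw [Finset.sum_const, nsmul_eq_mul, hrestcard]
        _ ≤ _ := Finset.sum_le_sum (fun p hp => hall p (Finset.mem_filter.1 hp).1)
    have hc1 : ((210 - SP.card : ℕ) : ℚ) = 210 - (SP.card : ℚ) := by
      push_cast [Nat.cast_sub hSPle]; ring
    have hc2 : (NS : ℚ) ≤ (SP.card : ℚ) := by exact_mod_cast hNS
    have hc3 : (SP.card : ℚ) ≤ 210 := by exact_mod_cast hSPle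
    rw [hc1] at h2
    have key : ((SP.card : ℚ) - NS) * (B - b) ≥ 0 :=
      mul_nonneg (by linarith) (by linarith)
    rw [← hsplit]
    nlinarith
  have hNScast : ((A₀.card * (21 - A₀.card) : ℕ) : ℚ) = (A₀.card : ℚ) * (21 - (A₀.card : ℚ)) := by
    push_cast [Nat.cast_sub (by omega : A₀.card ≤ 21)]; ring
  -- case analysis on M = A₀.card
  rcases le_or_gt A₀.card 6 with hc | hc
  · -- M ≤ 6
    have hall : ∀ p ∈ pairs, (11/30 : ℚ) ≤ ∑ A ∈ Qp P p, w A.card := by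
      intro p hp
      have hk := kgen hP (hpcard p hp) (M := 6) (fun A hA => le_trans (hmax A hA) hc)
      have hk5 : 5 ≤ (Qp P p).card := by omega
      have hk5' : (5:ℚ) ≤ ((Qp P p).card : ℚ) := by exact_mod_cast hk5
      have := fb1 hP (hpcard p hp)
      linarith
    have := glue (11/30) (11/30) 0 le_rfl (Nat.zero_le _) (fun p hp => hall p (hSPsub p hp)) hall
    push_cast at this
    linarith
  rcases eq_or_lt_of_le (Nat.succ_le_of_lt hc) with hc7 | hc8
  · -- M = 7
    have hM7 : A₀.card = 7 := hc7.symm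
    have hall : ∀ p ∈ pairs, (22/105 : ℚ) ≤ ∑ A ∈ Qp P p, w A.card := by
      intro p hp
      have hk := kgen hP (hpcard p hp) (M := 7) (fun A hA => le_trans (hmax A hA) (le_of_eq hM7))
      have hk4 : 4 ≤ (Qp P p).card := by omega
      have hk4' : (4:ℚ) ≤ ((Qp P p).card : ℚ) := by exact_mod_cast hk4
      have := fb2 hP (hpcard p hp)
      linarith
    have hside : ∀ p ∈ SP, (17/30 : ℚ) ≤ ∑ A ∈ Qp P p, w A.card := by
      intro p hp
      have hone : (p ∩ A₀).card = 1 := (Finset.mem_filter.1 hp).2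
      have hk := kside hP (hpcard p (hSPsub p hp)) hA₀ hone
      rw [hM7] at hk
      have hk6 : (6:ℚ) ≤ ((Qp P p).card : ℚ) := by exact_mod_cast hk
      have := fb1 hP (hpcard p (hSPsub p hp))
      linarith
    have hNS : (98 : ℕ) ≤ SP.card := by
      have := hSPcount; rw [hM7] at this; omega
    have := glue (17/30) (22/105) 98 (by norm_num) hNS hside hall
    push_cast at this
    linarith
  rcases le_or_gt A₀.card 17 with hc17 | hc18
  · -- 8 ≤ M ≤ 17
    have h8 : 8 ≤ A₀.card := hc8
    have hall : ∀ p ∈ pairs, (19/(5*((A₀.card:ℚ)-2)) - 19/30 : ℚ) ≤ ∑ A ∈ Qp P p, w A.card := by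
      intro p hp
      have hk := kgen hP (hpcard p hp) (M := A₀.card) (fun A hA => hmax A hA)
      have hcast : (19:ℚ) ≤ ((Qp P p).card : ℚ) * ((A₀.card:ℚ) - 2) := by
        have h1 : ((Qp P p).card * (A₀.card - 2) : ℕ) = (Qp P p).card * (A₀.card - 2) := rfl
        calc (19:ℚ) ≤ (((Qp P p).card * (A₀.card - 2) : ℕ) : ℚ) := by exact_mod_cast hk
          _ = ((Qp P p).card : ℚ) * (((A₀.card - 2 : ℕ)) : ℚ) := by push_cast; ring
          _ = ((Qp P p).card : ℚ) * ((A₀.card:ℚ) - 2) := by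
              rw [Nat.cast_sub (by omega : 2 ≤ A₀.card)]; norm_num
      have hpos : (0:ℚ) < (A₀.card:ℚ) - 2 := by
        have : (8:ℚ) ≤ (A₀.card:ℚ) := by exact_mod_cast h8
        linarith
      have hkq : 19/((A₀.card:ℚ)-2) ≤ ((Qp P p).card : ℚ) := by
        rw [div_le_iff₀ hpos]; linarith
      have := fb1 hP (hpcard p hp)
      have h5 : 19/(5*((A₀.card:ℚ)-2)) ≤ ((Qp P p).card : ℚ)/5 := by
        rw [show (5:ℚ)*((A₀.card:ℚ)-2) = ((A₀.card:ℚ)-2)*5 by ring, ← div_div]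
        linarith
      linarith
    have hside : ∀ p ∈ SP, (((A₀.card:ℚ)-1)/5 - 19/30 : ℚ) ≤ ∑ A ∈ Qp P p, w A.card := by
      intro p hp
      have hone : (p ∩ A₀).card = 1 := (Finset.mem_filter.1 hp).2
      have hk := kside hP (hpcard p (hSPsub p hp)) hA₀ hone
      have hkc : ((A₀.card:ℚ) - 1) ≤ ((Qp P p).card : ℚ) := by
        calc ((A₀.card:ℚ) - 1) = (((A₀.card - 1 : ℕ)) : ℚ) := by
              rw [Nat.cast_sub (by omega : 1 ≤ A₀.card)]; norm_num
          _ ≤ _ := by exact_mod_cast hk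
      have := fb1 hP (hpcard p (hSPsub p hp))
      linarith
    have := glue (((A₀.card:ℚ)-1)/5 - 19/30) (19/(5*((A₀.card:ℚ)-2)) - 19/30)
      (A₀.card * (21 - A₀.card)) ?_ hSPcount hside hall
    · have hnum := numeric3 A₀.card h8 hc17
      rw [hNScast] at this
      have hc210 : ((210 - A₀.card*(21-A₀.card) : ℕ) : ℚ) = 210 - (A₀.card : ℚ) * (21 - (A₀.card : ℚ)) := by
        have hle : A₀.card * (21 - A₀.card) ≤ 210 := le_trans hSPcount hSPle
        push_cast [Nat.cast_sub hle, Nat.cast_sub (by omega : A₀.card ≤ 21)]; ring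
      rw [hNScast, hc210] at hnum
      linarith
    · -- b ≤ B
      have h1 : (8:ℚ) ≤ (A₀.card:ℚ) := by exact_mod_cast h8
      have hpos : (0:ℚ) < (A₀.card:ℚ) - 2 := by linarith
      have hd : 19/((A₀.card:ℚ)-2) ≤ (A₀.card:ℚ)-1 := by
        rw [div_le_iff₀ hpos]; nlinarith
      rw [show (5:ℚ)*((A₀.card:ℚ)-2) = ((A₀.card:ℚ)-2)*5 by ring, ← div_div]
      linarith
  · -- 18 ≤ M ≤ 20
    have h18 : 18 ≤ A₀.card := hc18
    have hside : ∀ p ∈ SP, ((A₀.card:ℚ)-1) * w (23 - A₀.card) ≤ ∑ A ∈ Qp P p, w A.card := by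
      intro p hp
      have hone : (p ∩ A₀).card = 1 := (Finset.mem_filter.1 hp).2
      have hp2 : p.card = 2 := hpcard p (hSPsub p hp)
      have hk := kside hP hp2 hA₀ hone
      have hwA : ∀ A ∈ Qp P p, w (23 - A₀.card) ≤ w A.card := by
        intro A hA
        have h3 : 3 ≤ A.card := (mem_Qp.1 hA).1.2
        have hsmall := block_small_side hP hp2 hA₀P hone hA
        exact w_anti (by omega) (by omega)
      calc ((A₀.card:ℚ)-1) * w (23 - A₀.card)
          ≤ ((Qp P p).card : ℚ) * w (23 - A₀.card) := by
            have hc : ((A₀.card:ℚ) - 1) ≤ ((Qp P p).card : ℚ) := by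
              calc ((A₀.card:ℚ) - 1) = (((A₀.card - 1 : ℕ)) : ℚ) := by
                    rw [Nat.cast_sub (by omega : 1 ≤ A₀.card)]; norm_num
                _ ≤ _ := by exact_mod_cast hk
            exact mul_le_mul_of_nonneg_right hc (w_nonneg _)
        _ = ∑ _A ∈ Qp P p, w (23 - A₀.card) := by rw [Finset.sum_const, nsmul_eq_mul]
        _ ≤ _ := Finset.sum_le_sum hwA
    have hall : ∀ p ∈ pairs, (0:ℚ) ≤ ∑ A ∈ Qp P p, w A.card :=
      fun p _ => Finset.sum_nonneg (fun A _ => w_nonneg _)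
    have hBnn : (0:ℚ) ≤ ((A₀.card:ℚ)-1) * w (23 - A₀.card) := by
      apply mul_nonneg _ (w_nonneg _)
      have : (18:ℚ) ≤ (A₀.card:ℚ) := by exact_mod_cast h18
      linarith
    have hglue := glue (((A₀.card:ℚ)-1) * w (23 - A₀.card)) 0
      (A₀.card * (21 - A₀.card)) hBnn hSPcount hside hall
    rw [hNScast] at hglue
    have hnum : (77:ℚ) ≤ (A₀.card : ℚ) * (21 - (A₀.card : ℚ)) * (((A₀.card:ℚ)-1) * w (23 - A₀.card)) := by
      have hMle : A₀.card ≤ 20 := hM20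
      interval_cases hv : A₀.card <;>
        norm_num [w, Nat.choose] <;> norm_num
    nlinarith [hglue, hnum]
end CP21

namespace CP21

open Finset

def myP : Finset (Finset (Fin 21)) := {{1,5,9,13,17}, {0,5,6,7,8}, {2,5,10,15,20}, {4,5,12,14,19}, {3,5,11,16,18}, {0,1,2,3,4}, {1,6,10,14,18}, {1,8,12,16,20}, {1,7,11,15,19}, {0,9,10,11,12}, {2,6,9,16,19}, {4,8,9,15,18}, {3,7,9,14,20}, {0,17,18,19,20}, {3,6,12,15,17}, {2,8,11,14,17}, {4,7,10,16,17}, {0,13,14,15,16}, {4,6,11,13,20}, {3,8,10,13,19}, {2,7,12,13,18}, {2,4,9,12,17,20}, {0,2,8,12,15,19}, {0,1,6,9,15,20}, {3,4,5,6,9,10}, {1,4,6,8,17,19}, {2,3,6,8,18,20}, {5,8,10,12,17,18}, {1,4,10,12,13,15}, {0,2,5,9,14,18}, {6,7,10,12,19,20}, {0,2,7,11,16,20}, {1,4,9,11,14,16}, {0,4,8,10,14,20}, {1,4,5,7,18,20}, {0,3,7,10,15,18}, {3,4,13,14,17,18}, {6,7,9,11,17,18}, {0,1,8,11,13,18}, {0,1,7,12,14,17},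 {1,2,7,8,9,10}, {2,4,10,11,18,19}, {0,2,6,10,13,17}, {0,4,6,12,16,18}, {0,3,6,11,14,19}, {0,4,7,9,13,19}, {2,4,6,7,14,15}, {2,4,5,8,13,16}, {2,3,5,7,17,19}, {1,2,15,16,17,18}, {11,12,13,16,17,19}, {0,4,5,11,15,17}, {5,8,9,11,19,20}, {3,4,15,16,19,20}, {6,8,10,11,15,16}, {9,10,13,16,18,20}, {2,3,10,12,14,16}, {5,7,10,11,13,14}, {5,6,14,16,17,20}, {3,4,7,8,11,12}, {6,8,9,12,13,14}, {11,12,14,15,18,20}, {5,7,9,12,15,16}, {1,3,6,7,13,16}, {5,6,13,15,18,19}, {1,3,10,11,17,20}, {0,1,5,10,16,19}, {0,3,8,9,16,17}, {7,8,14,16,18,19}, {7,8,13,15,17,20}, {2,3,9,11,13,15}, {1,3,9,12,18,19}, {1,2,13,14,19,20}, {0,3,5,12,13,20}, {9,10,14,15,17,19}, {1,3,5,8,14,15}, {1,2,5,6,11,12}}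


lemma myP_card : myP.card = 77 := by decide

lemma myP_nuniv : (Finset.univ : Finset (Fin 21)) ∉ myP := by decide

lemma myP_cover : ∀ x y z : Fin 21, x < y → y < z →
    (myP.filter (fun A => x ∈ A ∧ y ∈ A ∧ z ∈ A)).card = 1 := by decide

lemma sorted_three (S : Finset (Fin 21)) (hS : S.card = 3) :
    ∃ x y z : Fin 21, x < y ∧ y < z ∧ S = {x, y, z} := by
  obtain ⟨a, b, c, hab, hac, hbc, rfl⟩ := Finset.card_eq_three.1 hS
  have tri : ∀ u v : Fin 21, u ≠ v → u < v ∨ v < u := fun u v h => h.lt_or_gt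
  have perm : ∀ x y z : Fin 21, ({x,y,z} : Finset (Fin 21)) = {a,b,c} →
      x < y → y < z → ∃ x' y' z' : Fin 21, x' < y' ∧ y' < z' ∧ ({a,b,c} : Finset (Fin 21)) = {x',y',z'} :=
    fun x y z he h1 h2 => ⟨x, y, z, h1, h2, he.symm⟩
  rcases tri a b hab with h1 | h1 <;> rcases tri b c hbc with h2 | h2 <;>
    rcases tri a c hac with h3 | h3
  · exact ⟨a, b, c, h1, h2, rfl⟩
  · exact absurd (h1.trans h2) (lt_asymm h3)
  · exact ⟨a, c, b, h3, h2, by ext t; simp; tauto⟩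
  · exact ⟨c, a, b, h3, h1, by ext t; simp; tauto⟩
  · exact ⟨b, a, c, h1, h3, by ext t; simp; tauto⟩
  · exact ⟨b, c, a, h2, h3, by ext t; simp; tauto⟩
  · exact absurd (h2.trans h1) (lt_asymm h3)
  · exact ⟨c, b, a, h2, h1, by ext t; simp; tauto⟩

lemma subset_iff_mem {x y z : Fin 21} {B : Finset (Fin 21)} :
    ({x, y, z} : Finset (Fin 21)) ⊆ B ↔ x ∈ B ∧ y ∈ B ∧ z ∈ B := by
  simp [Finset.insert_subset_iff]

lemma myP_partition : IsCliquePartition 21 3 myP := by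
  constructor
  · intro A hA hAu
    exact myP_nuniv (hAu ▸ hA)
  · intro S hS
    obtain ⟨x, y, z, hxy, hyz, rfl⟩ := sorted_three S hS
    have h1 := myP_cover x y z hxy hyz
    obtain ⟨A, hA⟩ := Finset.card_eq_one.1 h1
    have hAmem : A ∈ myP.filter (fun A => x ∈ A ∧ y ∈ A ∧ z ∈ A) := by
      rw [hA]; exact Finset.mem_singleton_self A
    obtain ⟨hAP, hAxyz⟩ := Finset.mem_filter.1 hAmem
    refine ⟨A, ⟨hAP, subset_iff_mem.2 hAxyz⟩, ?_⟩
    intro B hB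
    have hBmem : B ∈ myP.filter (fun A => x ∈ A ∧ y ∈ A ∧ z ∈ A) :=
      Finset.mem_filter.2 ⟨hB.1, subset_iff_mem.1 hB.2⟩
    rw [hA] at hBmem
    exact Finset.mem_singleton.1 hBmem

end CP21

/-- `cp(21, 3) = 77`. -/
theorem cp_21_3 : cp 21 3 = 77 := by
  have hmem : 77 ∈ {t | ∃ P : Finset (Finset (Fin 21)), IsCliquePartition 21 3 P ∧ P.card = t} :=
    ⟨CP21.myP, CP21.myP_partition, CP21.myP_card⟩
  apply le_antisymm
  · exact Nat.sInf_le hmem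
  · apply le_csInf ⟨77, hmem⟩
    rintro t ⟨P, hP, rfl⟩
    exact CP21.lower_bound hP
end

section
/- Let n > k ≥ r ≥ 2 be integers such that m = C(n, r)/C(k, r) is a positive integer. Then there exists a partition of the r-element subsets of [n] into m cliques of size k (i.e., m subsets of [n], each of size k, such that every r-element subset of [n] lies in exactly one of them) if and only if z(m, n, 2, r) = km. -/
open Finset

section Aux

lemma choose_telescope (s : ℕ) : ∀ a b : ℕ, a ≤ b →
    b.choose (s+1) = a.choose (s+1) + ∑ j ∈ Finset.Ico a b, j.choose s := by
  intro a b hab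
  induction b with
  | zero => simp [Nat.le_zero.mp hab]
  | succ b ih =>
    rcases Nat.lt_or_ge a (b+1) with h | h
    · have hab' : a ≤ b := Nat.lt_succ_iff.mp h
      rw [Finset.sum_Ico_succ_top hab', Nat.choose_succ_succ']
      rw [ih hab']; ring
    · have : a = b + 1 := le_antisymm hab h
      simp [this]

lemma tangent_le (k r d : ℕ) (hr : 1 ≤ r) (hk : r ≤ k) :
    (k.choose r : ℤ) + ((d : ℤ) - k) * ((k-1).choose (r-1)) ≤ (d.choose r : ℤ) := by
  obtain ⟨s, rfl⟩ : ∃ s, r = s + 1 := ⟨r - 1, (Nat.succ_pred_eq_of_pos hr).symm⟩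
  simp only [Nat.add_sub_cancel]
  rcases le_or_gt k d with h | h
  · have ht := choose_telescope s k d h
    have hsum : (d - k) * ((k-1).choose s) ≤ ∑ j ∈ Finset.Ico k d, j.choose s := by
      calc (d - k) * ((k-1).choose s) = ∑ _j ∈ Finset.Ico k d, (k-1).choose s := by
            rw [Finset.sum_const, Nat.card_Ico]; ring
        _ ≤ _ := Finset.sum_le_sum (fun j hj => Nat.choose_le_choose s
            (le_trans (Nat.sub_le k 1) (Finset.mem_Ico.mp hj).1))
    calc (k.choose (s+1) : ℤ) + ((d:ℤ) - k) * ((k-1).choose s)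
        = (k.choose (s+1) : ℤ) + (((d-k) * ((k-1).choose s) : ℕ) : ℤ) := by
          push_cast [Nat.cast_sub h]; ring
      _ ≤ (k.choose (s+1) : ℤ) + ((∑ j ∈ Finset.Ico k d, j.choose s : ℕ) : ℤ) := by
          exact_mod_cast add_le_add le_rfl (Nat.cast_le.mpr hsum)
      _ = (d.choose (s+1) : ℤ) := by rw [ht]; push_cast; ring
  · have hdk : d ≤ k := le_of_lt h
    have ht := choose_telescope s d k hdk
    have hsum : ∑ j ∈ Finset.Ico d k, j.choose s ≤ (k - d) * ((k-1).choose s) := by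
      calc ∑ j ∈ Finset.Ico d k, j.choose s
          ≤ ∑ _j ∈ Finset.Ico d k, (k-1).choose s :=
            Finset.sum_le_sum (fun j hj => Nat.choose_le_choose s
              (Nat.le_sub_one_of_lt (Finset.mem_Ico.mp hj).2))
        _ = (k - d) * ((k-1).choose s) := by rw [Finset.sum_const, Nat.card_Ico]; ring
    have h1 : (k.choose (s+1) : ℤ) ≤ d.choose (s+1) + ((k:ℤ) - d) * ((k-1).choose s) := by
      calc (k.choose (s+1) : ℤ) = d.choose (s+1) + ((∑ j ∈ Finset.Ico d k, j.choose s : ℕ) : ℤ) := by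
            rw [ht]; push_cast; ring
        _ ≤ d.choose (s+1) + (((k-d) * ((k-1).choose s) : ℕ) : ℤ) := by
            exact_mod_cast add_le_add le_rfl (Nat.cast_le.mpr hsum)
        _ = d.choose (s+1) + ((k:ℤ) - d) * ((k-1).choose s) := by
            push_cast [Nat.cast_sub hdk]; ring
    linarith

lemma tangent_lt (k r d : ℕ) (hr : 2 ≤ r) (hk : r ≤ k) (hd : k < d) :
    (k.choose r : ℤ) + ((d : ℤ) - k) * ((k-1).choose (r-1)) < (d.choose r : ℤ) := by
  obtain ⟨s, rfl⟩ : ∃ s, r = s + 1 := ⟨r - 1, (Nat.succ_pred_eq_of_pos (by omega)).symm⟩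
  simp only [Nat.add_sub_cancel]
  have hs : 1 ≤ s := by omega
  have hstrict : (k-1).choose s < k.choose s := by
    obtain ⟨t, rfl⟩ : ∃ t, s = t + 1 := ⟨s - 1, (Nat.succ_pred_eq_of_pos hs).symm⟩
    obtain ⟨k', rfl⟩ : ∃ k', k = k' + 1 := ⟨k - 1, by omega⟩
    simp only [Nat.add_sub_cancel]
    rw [Nat.choose_succ_succ]
    have : 0 < k'.choose t := Nat.choose_pos (by omega)
    simp only [Nat.succ_eq_add_one] at *
    omega
  have ht := choose_telescope s k d (le_of_lt hd)
  have hsum : (d - k) * ((k-1).choose s) < ∑ j ∈ Finset.Ico k d, j.choose s := by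
    have hmem : k ∈ Finset.Ico k d := Finset.mem_Ico.mpr ⟨le_refl _, hd⟩
    calc (d - k) * ((k-1).choose s) = ∑ _j ∈ Finset.Ico k d, (k-1).choose s := by
          rw [Finset.sum_const, Nat.card_Ico]; ring
      _ < _ := by
        apply Finset.sum_lt_sum
        · exact fun j hj => Nat.choose_le_choose s
            (le_trans (Nat.sub_le k 1) (Finset.mem_Ico.mp hj).1)
        · exact ⟨k, hmem, lt_of_lt_of_le hstrict (Nat.choose_le_choose s (le_refl k))⟩
  calc (k.choose (s+1) : ℤ) + ((d:ℤ) - k) * ((k-1).choose s)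
      = (k.choose (s+1) : ℤ) + (((d-k) * ((k-1).choose s) : ℕ) : ℤ) := by
        push_cast [Nat.cast_sub (le_of_lt hd)]; ring
    _ < (k.choose (s+1) : ℤ) + ((∑ j ∈ Finset.Ico k d, j.choose s : ℕ) : ℤ) := by
        exact_mod_cast add_lt_add_of_le_of_lt le_rfl (Nat.cast_lt.mpr hsum)
    _ = (d.choose (s+1) : ℤ) := by rw [ht]; push_cast; ring

variable {m n : ℕ}

lemma card_eq_sum_deg (E : Finset (Fin m × Fin n)) :
    E.card = ∑ a : Fin m, (Finset.univ.filter (fun b : Fin n => (a, b) ∈ E)).card := by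
  have h1 : E = Finset.univ.filter (· ∈ E) := by simp
  rw [h1, Finset.card_filter, Fintype.sum_prod_type]
  congr 1
  ext a
  rw [Finset.card_filter]
  simp

lemma disj_powerset (r : ℕ) (E : Finset (Fin m × Fin n))
    (hE : ∀ a a' : Fin m, a ≠ a' →
      (Finset.univ.filter (fun b : Fin n => (a, b) ∈ E ∧ (a', b) ∈ E)).card < r)
    {a a' : Fin m} (ha : a ≠ a') :
    Disjoint ((Finset.univ.filter (fun b : Fin n => (a, b) ∈ E)).powersetCard r)
      ((Finset.univ.filter (fun b : Fin n => (a', b) ∈ E)).powersetCard r) := by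
  rw [Finset.disjoint_left]
  intro S hS hS'
  rw [Finset.mem_powersetCard] at hS hS'
  have hsub : S ⊆ Finset.univ.filter (fun b : Fin n => (a, b) ∈ E ∧ (a', b) ∈ E) := by
    intro x hx
    simp only [Finset.mem_filter, Finset.mem_univ, true_and]
    have h1 := hS.1 hx
    have h2 := hS'.1 hx
    simp only [Finset.mem_filter] at h1 h2
    exact ⟨h1.2, h2.2⟩
  have := Finset.card_le_card hsub
  have := hE a a' ha
  omega

lemma sum_choose_le (r : ℕ) (E : Finset (Fin m × Fin n))
    (hE : ∀ a a' : Fin m, a ≠ a' →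
      (Finset.univ.filter (fun b : Fin n => (a, b) ∈ E ∧ (a', b) ∈ E)).card < r) :
    ∑ a : Fin m, ((Finset.univ.filter (fun b : Fin n => (a, b) ∈ E)).card).choose r
      ≤ n.choose r := by
  set T : Fin m → Finset (Finset (Fin n)) :=
    fun a => (Finset.univ.filter (fun b : Fin n => (a, b) ∈ E)).powersetCard r with hT
  have hdisj : ∀ a ∈ Finset.univ, ∀ a' ∈ Finset.univ, a ≠ a' → Disjoint (T a) (T a') :=
    fun a _ a' _ ha => disj_powerset r E hE ha
  have hcard : (Finset.univ.biUnion T).card = ∑ a : Fin m, (T a).card :=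
    Finset.card_biUnion hdisj
  have hsub : Finset.univ.biUnion T ⊆ (Finset.univ : Finset (Fin n)).powersetCard r := by
    intro S hS
    rw [Finset.mem_biUnion] at hS
    obtain ⟨a, _, hSa⟩ := hS
    rw [Finset.mem_powersetCard] at hSa ⊢
    exact ⟨Finset.subset_univ _, hSa.2⟩
  have h2 := Finset.card_le_card hsub
  rw [hcard] at h2
  simp only [hT, Finset.card_powersetCard] at h2
  rwa [Finset.card_univ, Fintype.card_fin] at h2

/-- Upper bound: any valid `E` has at most `k*m` edges. -/
lemma card_le_km (k r : ℕ) (hr : 2 ≤ r) (hk : r ≤ k) (hmc : m * Nat.choose k r = Nat.choose n r)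
    (E : Finset (Fin m × Fin n))
    (hE : ∀ a a' : Fin m, a ≠ a' →
      (Finset.univ.filter (fun b : Fin n => (a, b) ∈ E ∧ (a', b) ∈ E)).card < r) :
    E.card ≤ k * m := by
  set d : Fin m → ℕ := fun a => (Finset.univ.filter (fun b : Fin n => (a, b) ∈ E)).card with hd
  have hdeg : E.card = ∑ a, d a := card_eq_sum_deg E
  have hle : ∑ a : Fin m, (d a).choose r ≤ m * Nat.choose k r := by
    rw [hmc]; exact sum_choose_le r E hE
  have hc1 : (1:ℤ) ≤ ((k-1).choose (r-1) : ℤ) := by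
    exact_mod_cast Nat.one_le_iff_ne_zero.mpr (Nat.choose_pos (by omega : r - 1 ≤ k - 1)).ne'
  set c1 : ℤ := ((k-1).choose (r-1) : ℤ) with hc1def
  have e1 : ∑ a : Fin m, ((k.choose r : ℤ) + ((d a : ℤ) - k) * c1)
      = m * k.choose r + ((∑ a, (d a : ℤ)) - m*k) * c1 := by
    rw [Finset.sum_add_distrib, Finset.sum_const, Finset.card_univ, Fintype.card_fin,
      ← Finset.sum_mul, Finset.sum_sub_distrib, Finset.sum_const, Finset.card_univ,
      Fintype.card_fin]
    push_cast; ring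
  have hts : (m : ℤ) * (k.choose r) + ((∑ a, (d a : ℤ)) - m*k) * c1
      ≤ ∑ a : Fin m, ((d a).choose r : ℤ) := by
    rw [← e1]
    exact Finset.sum_le_sum (fun a (_ : a ∈ Finset.univ) => tangent_le k r (d a) (by omega) hk)
  have hsumle : (∑ a : Fin m, ((d a).choose r : ℤ)) ≤ (m : ℤ) * (k.choose r) := by
    exact_mod_cast Nat.cast_le.mpr hle
  have hfin : ((∑ a, (d a : ℤ)) - m*k) * c1 ≤ 0 := by linarith
  have hZ : (∑ a, (d a : ℤ)) ≤ m*k := by nlinarith [hfin, hc1]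
  have : ((∑ a, d a : ℕ) : ℤ) ≤ ((k*m : ℕ) : ℤ) := by push_cast; push_cast at hZ; linarith
  omega

/-- In an extremal configuration all degrees equal `k`. -/
lemma degs_eq_k (k r : ℕ) (hr : 2 ≤ r) (hk : r ≤ k)
    (hmc : m * Nat.choose k r = Nat.choose n r)
    (E : Finset (Fin m × Fin n))
    (hE : ∀ a a' : Fin m, a ≠ a' →
      (Finset.univ.filter (fun b : Fin n => (a, b) ∈ E ∧ (a', b) ∈ E)).card < r)
    (hcard : E.card = k * m) :
    ∀ a : Fin m, (Finset.univ.filter (fun b : Fin n => (a, b) ∈ E)).card = k := by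
  set d : Fin m → ℕ := fun a => (Finset.univ.filter (fun b : Fin n => (a, b) ∈ E)).card with hd
  have hdeg : ∑ a, d a = k * m := by rw [← card_eq_sum_deg E]; exact hcard
  have hle : ∑ a : Fin m, (d a).choose r ≤ m * Nat.choose k r := by
    rw [hmc]; exact sum_choose_le r E hE
  set c1 : ℤ := ((k-1).choose (r-1) : ℤ) with hc1def
  set t : Fin m → ℤ := fun a => ((d a).choose r : ℤ) - (k.choose r : ℤ) - ((d a : ℤ) - k) * c1
    with htdef
  have htnn : ∀ a ∈ Finset.univ, 0 ≤ t a := fun a _ => by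
    have := tangent_le k r (d a) (by omega) hk
    simp only [htdef]; linarith
  have hsumt : ∑ a : Fin m, t a ≤ 0 := by
    have e1 : ∑ a : Fin m, t a
        = (∑ a : Fin m, ((d a).choose r : ℤ)) - m * k.choose r
          - ((∑ a, (d a : ℤ)) - m*k) * c1 := by
      simp only [htdef]
      rw [Finset.sum_sub_distrib, Finset.sum_sub_distrib, Finset.sum_const, Finset.card_univ,
        Fintype.card_fin, ← Finset.sum_mul, Finset.sum_sub_distrib, Finset.sum_const,
        Finset.card_univ, Fintype.card_fin]
      push_cast; ring
    have e2 : (∑ a, (d a : ℤ)) = (m : ℤ) * k := by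
      have : ((∑ a, d a : ℕ) : ℤ) = ((k * m : ℕ) : ℤ) := by exact_mod_cast hdeg
      push_cast at this; push_cast; linarith
    have e3 : (∑ a : Fin m, ((d a).choose r : ℤ)) ≤ (m : ℤ) * k.choose r := by
      exact_mod_cast Nat.cast_le.mpr hle
    rw [e1, e2]
    simp
    linarith
  have htz : ∀ a ∈ Finset.univ, t a = 0 := by
    intro a ha
    have h1 := Finset.sum_le_sum htnn
    simp only [Finset.sum_const_zero] at h1
    have hall := (Finset.sum_eq_zero_iff_of_nonneg htnn).mp (le_antisymm hsumt h1)
    exact hall a ha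
  have hdle : ∀ a : Fin m, d a ≤ k := by
    intro a
    by_contra hlt
    push_neg at hlt
    have := tangent_lt k r (d a) hr hk hlt
    have := htz a (Finset.mem_univ a)
    simp only [htdef] at this
    linarith
  intro a
  have := (Finset.sum_eq_sum_iff_of_le (fun i (_ : i ∈ Finset.univ) => hdle i)).mp ?_ a
    (Finset.mem_univ a)
  · exact this
  · rw [hdeg, Finset.sum_const, Finset.card_univ, Fintype.card_fin, smul_eq_mul, mul_comm]

/-- If the count is tight, every `r`-set is covered by some neighbourhood. -/
lemma cover_of_sum_eq (r : ℕ) (E : Finset (Fin m × Fin n))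
    (hE : ∀ a a' : Fin m, a ≠ a' →
      (Finset.univ.filter (fun b : Fin n => (a, b) ∈ E ∧ (a', b) ∈ E)).card < r)
    (hsum : ∑ a : Fin m, ((Finset.univ.filter (fun b : Fin n => (a, b) ∈ E)).card).choose r
      = n.choose r) :
    ∀ S : Finset (Fin n), S.card = r →
      ∃ a : Fin m, S ⊆ Finset.univ.filter (fun b : Fin n => (a, b) ∈ E) := by
  set T : Fin m → Finset (Finset (Fin n)) :=
    fun a => (Finset.univ.filter (fun b : Fin n => (a, b) ∈ E)).powersetCard r with hT
  have hdisj : ∀ a ∈ Finset.univ, ∀ a' ∈ Finset.univ, a ≠ a' → Disjoint (T a) (T a') :=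
    fun a _ a' _ ha => disj_powerset r E hE ha
  have hcard : (Finset.univ.biUnion T).card = ∑ a : Fin m, (T a).card :=
    Finset.card_biUnion hdisj
  have hsub : Finset.univ.biUnion T ⊆ (Finset.univ : Finset (Fin n)).powersetCard r := by
    intro S hS
    rw [Finset.mem_biUnion] at hS
    obtain ⟨a, _, hSa⟩ := hS
    rw [Finset.mem_powersetCard] at hSa ⊢
    exact ⟨Finset.subset_univ _, hSa.2⟩
  have heq : Finset.univ.biUnion T = (Finset.univ : Finset (Fin n)).powersetCard r := by
    apply Finset.eq_of_subset_of_card_le hsub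
    rw [hcard]
    simp only [hT, Finset.card_powersetCard]
    rw [hsum, Finset.card_univ, Fintype.card_fin]
  intro S hS
  have : S ∈ (Finset.univ : Finset (Fin n)).powersetCard r :=
    Finset.mem_powersetCard.mpr ⟨Finset.subset_univ _, hS⟩
  rw [← heq, Finset.mem_biUnion] at this
  obtain ⟨a, _, hSa⟩ := this
  exact ⟨a, (Finset.mem_powersetCard.mp hSa).1⟩

end Aux

/-- The Zarankiewicz number `zar m n r = z(m, n, 2, r)`: the maximum number of
edges in a bipartite graph with parts of sizes `m` and `n` in which no two
vertices of the first part have `r` common neighbors in the second part. -/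
noncomputable def zar (m n r : ℕ) : ℕ :=
  sSup {e | ∃ E : Finset (Fin m × Fin n),
    (∀ a a' : Fin m, a ≠ a' →
      (Finset.univ.filter (fun b : Fin n => (a, b) ∈ E ∧ (a', b) ∈ E)).card < r) ∧
    E.card = e}

/-- for `n > k ≥ r ≥ 2` with `m = C(n,r)/C(k,r)` a positive
integer, the `r`-subsets of `[n]` can be partitioned into `m` cliques of size
`k` iff `z(m, n, 2, r) = km`. -/
theorem partition_iff_zarankiewicz (n k r : ℕ) (hr : 2 ≤ r) (hk : r ≤ k)
    (hn : k < n) (m : ℕ) (hm : 0 < m)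
    (hmc : m * Nat.choose k r = Nat.choose n r) :
    (∃ P : Finset (Finset (Fin n)), P.card = m ∧ (∀ A ∈ P, A.card = k) ∧
      ∀ S : Finset (Fin n), S.card = r → ∃! A, A ∈ P ∧ S ⊆ A) ↔
    zar m n r = k * m := by
  set W : Set ℕ := {e | ∃ E : Finset (Fin m × Fin n),
    (∀ a a' : Fin m, a ≠ a' →
      (Finset.univ.filter (fun b : Fin n => (a, b) ∈ E ∧ (a', b) ∈ E)).card < r) ∧
    E.card = e} with hW
  have hbdd : ∀ e ∈ W, e ≤ k * m := by
    rintro e ⟨E, hE, rfl⟩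
    exact card_le_km k r hr hk hmc E hE
  have hW0 : (0 : ℕ) ∈ W := by
    refine ⟨∅, fun a a' _ => ?_, Finset.card_empty⟩
    simp only [Finset.notMem_empty, false_and, Finset.filter_false, Finset.card_empty]
    omega
  have hWne : W.Nonempty := ⟨0, hW0⟩
  have hWbdd : BddAbove W := ⟨k * m, fun e he => hbdd e he⟩
  constructor
  · -- forward: partition gives extremal graph
    rintro ⟨P, hPc, hPk, hPu⟩
    have e0 : Fin m ≃ {x // x ∈ P} := (Fintype.equivFinOfCardEq (by
      rw [Fintype.card_coe, hPc])).symm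
    set f : Fin m → Finset (Fin n) := fun a => (e0 a : Finset (Fin n)) with hf
    have hfinj : Function.Injective f := fun a a' h => by
      apply e0.injective
      exact Subtype.ext h
    have hfP : ∀ a, f a ∈ P := fun a => (e0 a).2
    have hfk : ∀ a, (f a).card = k := fun a => hPk _ (hfP a)
    set E : Finset (Fin m × Fin n) :=
      Finset.univ.filter (fun x : Fin m × Fin n => x.2 ∈ f x.1) with hE
    have hmem : ∀ a b, (a, b) ∈ E ↔ b ∈ f a := by
      intro a b; simp [hE]
    have hN : ∀ a, Finset.univ.filter (fun b : Fin n => (a, b) ∈ E) = f a := by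
      intro a; ext b; simp [hmem]
    have hcond : ∀ a a' : Fin m, a ≠ a' →
        (Finset.univ.filter (fun b : Fin n => (a, b) ∈ E ∧ (a', b) ∈ E)).card < r := by
      intro a a' ha
      by_contra hge
      push_neg at hge
      obtain ⟨S, hSsub, hScard⟩ := Finset.exists_subset_card_eq hge
      have hSa : S ⊆ f a := fun x hx => by
        have := hSsub hx; simp only [Finset.mem_filter, hmem] at this; exact this.2.1
      have hSa' : S ⊆ f a' := fun x hx => by
        have := hSsub hx; simp only [Finset.mem_filter, hmem] at this; exact this.2.2
      obtain ⟨A, _, hAuniq⟩ := hPu S hScard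
      have h1 : f a = A := hAuniq (f a) ⟨hfP a, hSa⟩
      have h2 : f a' = A := hAuniq (f a') ⟨hfP a', hSa'⟩
      exact ha (hfinj (h1.trans h2.symm))
    have hEcard : E.card = k * m := by
      rw [card_eq_sum_deg E]
      have : ∀ a : Fin m, (Finset.univ.filter (fun b : Fin n => (a, b) ∈ E)).card = k := by
        intro a; rw [hN a]; exact hfk a
      rw [Finset.sum_congr rfl (fun a _ => this a), Finset.sum_const, Finset.card_univ,
        Fintype.card_fin, smul_eq_mul, mul_comm]
    have hkmW : k * m ∈ W := ⟨E, hcond, hEcard⟩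
    exact le_antisymm (csSup_le hWne hbdd) (le_csSup hWbdd hkmW)
  · -- reverse: extremal graph gives partition
    intro hz
    have hmemW : zar m n r ∈ W := Nat.sSup_mem hWne hWbdd
    rw [hz] at hmemW
    obtain ⟨E, hE, hEcard⟩ := hmemW
    set N : Fin m → Finset (Fin n) :=
      fun a => Finset.univ.filter (fun b : Fin n => (a, b) ∈ E) with hNdef
    have hdeg : ∀ a : Fin m, (N a).card = k := degs_eq_k k r hr hk hmc E hE hEcard
    have hinter : ∀ a a' : Fin m,
        Finset.univ.filter (fun b : Fin n => (a, b) ∈ E ∧ (a', b) ∈ E) = N a ∩ N a' := by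
      intro a a'; ext b; simp [hNdef, Finset.mem_filter]
    have hsmall : ∀ a a' : Fin m, a ≠ a' → ∀ S : Finset (Fin n), S.card = r →
        S ⊆ N a → S ⊆ N a' → False := by
      intro a a' ha S hS h1 h2
      have hsub : S ⊆ N a ∩ N a' := Finset.subset_inter h1 h2
      have := Finset.card_le_card hsub
      rw [← hinter a a'] at this
      have := hE a a' ha
      omega
    have hNinj : Function.Injective N := by
      intro a a' h
      by_contra ha
      obtain ⟨S, hSsub, hScard⟩ := Finset.exists_subset_card_eq
        (le_trans hk (le_of_eq (hdeg a).symm))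
      exact hsmall a a' ha S hScard hSsub (h ▸ hSsub)
    have hcover : ∀ S : Finset (Fin n), S.card = r → ∃ a : Fin m, S ⊆ N a := by
      apply cover_of_sum_eq r E hE
      have : ∀ a : Fin m, ((N a).card).choose r = k.choose r := fun a => by rw [hdeg a]
      rw [Finset.sum_congr rfl (fun a _ => this a), Finset.sum_const, Finset.card_univ,
        Fintype.card_fin, smul_eq_mul, hmc]
    refine ⟨Finset.univ.image N, ?_, ?_, ?_⟩
    · rw [Finset.card_image_of_injective _ hNinj, Finset.card_univ, Fintype.card_fin]
    · intro A hA
      obtain ⟨a, _, rfl⟩ := Finset.mem_image.mp hA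
      exact hdeg a
    · intro S hS
      obtain ⟨a, hsub⟩ := hcover S hS
      refine ⟨N a, ⟨Finset.mem_image_of_mem N (Finset.mem_univ a), hsub⟩, ?_⟩
      rintro A ⟨hA, hAsub⟩
      obtain ⟨a', _, rfl⟩ := Finset.mem_image.mp hA
      by_contra hne
      exact hsmall a' a (fun h => hne (congrArg N h)) S hS hAsub hsub
end

section
/- Let q be a prime power, let n = q² + 1, and let m = qn. Then z(m, n, 2, 3) = (q² + q)·n. -/
open Finset

lemma two_mul_choose_two (a : ℕ) : 2 * a.choose 2 = a * (a - 1) := by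
  induction a with
  | zero => rfl
  | succ b ih =>
    rw [Nat.choose_succ_succ, Nat.mul_add, ih, Nat.choose_one_right, Nat.succ_sub_one]
    cases b with
    | zero => rfl
    | succ c => simp [Nat.succ_sub_one]; ring

lemma six_mul_choose_three (a : ℕ) : 6 * a.choose 3 = a * (a - 1) * (a - 2) := by
  induction a with
  | zero => rfl
  | succ b ih =>
    rw [Nat.choose_succ_succ, Nat.mul_add, ih, Nat.succ_sub_one]
    have h2 : 6 * b.choose 2 = 3 * (b * (b - 1)) := by
      rw [show (6:ℕ) = 3 * 2 by norm_num, mul_assoc, two_mul_choose_two]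
    rw [h2]
    match b with
    | 0 => rfl
    | 1 => rfl
    | (c+2) => simp [Nat.succ_sub_one, show c+2-2 = c from rfl]; ring

lemma choose_mono_left {a b : ℕ} (r : ℕ) (h : a ≤ b) : a.choose r ≤ b.choose r :=
  Nat.choose_le_choose r h

lemma choose_conv_aux1 {d e : ℕ} (h : d ≤ e) : d.choose 3 + (e - d) * d.choose 2 ≤ e.choose 3 := by
  induction e with
  | zero =>
    have : d = 0 := by omega
    subst this; simp
  | succ b ih =>
    rcases Nat.lt_or_ge d (b+1) with hd | hd
    · have hdb : d ≤ b := by omega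
      have := ih hdb
      have h2 : d.choose 2 ≤ b.choose 2 := Nat.choose_le_choose 2 hdb
      have h3 : (b+1) - d = (b - d) + 1 := by omega
      have h4 : (b+1).choose 3 = b.choose 2 + b.choose 3 := Nat.choose_succ_succ b 2
      have h5 : ((b-d)+1) * d.choose 2 = (b-d) * d.choose 2 + d.choose 2 := by ring
      rw [h3, h4, h5]
      omega
    · have : d = b + 1 := by omega
      subst this
      simp

lemma choose_conv_aux2 {d e : ℕ} (h : d ≤ e) : e.choose 3 ≤ d.choose 3 + (e - d) * e.choose 2 := by
  induction e with
  | zero => simp at h; subst h; simp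
  | succ b ih =>
    rcases Nat.lt_or_ge d (b+1) with hd | hd
    · have hdb : d ≤ b := by omega
      have := ih hdb
      have h2 : b.choose 2 ≤ (b+1).choose 2 := Nat.choose_le_choose 2 (by omega)
      have h3 : (b+1) - d = (b - d) + 1 := by omega
      have h4 : (b+1).choose 3 = b.choose 2 + b.choose 3 := Nat.choose_succ_succ b 2
      have hexp : ((b-d)+1) * ((b+1).choose 2) = (b-d) * ((b+1).choose 2) + (b+1).choose 2 := by ring
      have hmul : (b-d) * (b.choose 2) ≤ (b-d) * ((b+1).choose 2) := Nat.mul_le_mul_left _ h2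
      rw [h3, h4, hexp]
      omega
    · have : d = b + 1 := by omega
      subst this
      simp

/-- Convexity of `choose · 3`. -/
lemma choose_conv (d t : ℕ) : t.choose 3 + d * t.choose 2 ≤ d.choose 3 + t * t.choose 2 := by
  rcases Nat.le_total d t with h | h
  · have := choose_conv_aux2 h
    have h2 : t - d + d = t := by omega
    calc t.choose 3 + d * t.choose 2 ≤ d.choose 3 + (t - d) * t.choose 2 + d * t.choose 2 := by omega
      _ = d.choose 3 + ((t - d) + d) * t.choose 2 := by ring
      _ = d.choose 3 + t * t.choose 2 := by rw [h2]
  · have := choose_conv_aux1 h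
    have h2 : d - t + t = d := by omega
    calc t.choose 3 + d * t.choose 2 = t.choose 3 + ((d - t) + t) * t.choose 2 := by rw [h2]
      _ = (t.choose 3 + (d - t) * t.choose 2) + t * t.choose 2 := by ring
      _ ≤ d.choose 3 + t * t.choose 2 := by omega

lemma key_id (q : ℕ) (hq : 1 ≤ q) :
    (q^2+1).choose 3 = (q*(q^2+1)) * ((q+1).choose 3) := by
  apply Nat.eq_of_mul_eq_mul_left (show 0 < 6 by norm_num)
  rw [six_mul_choose_three,
    show 6 * (q*(q^2+1) * ((q+1).choose 3)) = (q*(q^2+1)) * (6 * (q+1).choose 3) by ring,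
    six_mul_choose_three]
  obtain ⟨r, rfl⟩ : ∃ r, q = r + 1 := ⟨q - 1, by omega⟩
  have hsq : (r+1)^2 = r^2 + 2*r + 1 := by ring
  have e1 : (r+1)^2 + 1 - 1 = r^2 + 2*r + 1 := by omega
  have e2 : (r+1)^2 + 1 - 2 = r^2 + 2*r := by omega
  rw [e1, e2, hsq]
  simp [Nat.succ_sub_one]
  ring


lemma zar_eq_of (m n r N : ℕ)
    (hub : ∀ E : Finset (Fin m × Fin n),
      (∀ a a' : Fin m, a ≠ a' →
        (Finset.univ.filter (fun b : Fin n => (a, b) ∈ E ∧ (a', b) ∈ E)).card < r) →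
      E.card ≤ N)
    (hex : ∃ E : Finset (Fin m × Fin n),
      (∀ a a' : Fin m, a ≠ a' →
        (Finset.univ.filter (fun b : Fin n => (a, b) ∈ E ∧ (a', b) ∈ E)).card < r) ∧
      E.card = N) :
    zar m n r = N := by
  obtain ⟨E0, hE0, hcard0⟩ := hex
  have hmem : N ∈ {e | ∃ E : Finset (Fin m × Fin n),
      (∀ a a' : Fin m, a ≠ a' →
        (Finset.univ.filter (fun b : Fin n => (a, b) ∈ E ∧ (a', b) ∈ E)).card < r) ∧
      E.card = e} := ⟨E0, hE0, hcard0⟩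
  have hbdd : ∀ e ∈ {e | ∃ E : Finset (Fin m × Fin n),
      (∀ a a' : Fin m, a ≠ a' →
        (Finset.univ.filter (fun b : Fin n => (a, b) ∈ E ∧ (a', b) ∈ E)).card < r) ∧
      E.card = e}, e ≤ N := by
    rintro e ⟨E, hE, rfl⟩
    exact hub E hE
  apply le_antisymm
  · exact csSup_le ⟨N, hmem⟩ hbdd
  · exact le_csSup ⟨N, hbdd⟩ hmem

lemma upper_bound (q : ℕ) (hq : 1 ≤ q) (E : Finset (Fin (q*(q^2+1)) × Fin (q^2+1)))
    (hE : ∀ a a' : Fin (q*(q^2+1)), a ≠ a' →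
      (Finset.univ.filter (fun b : Fin (q^2+1) => (a, b) ∈ E ∧ (a', b) ∈ E)).card < 3) :
    E.card ≤ (q^2+q)*(q^2+1) := by
  classical
  set N : Fin (q*(q^2+1)) → Finset (Fin (q^2+1)) :=
    fun a => Finset.univ.filter (fun b => (a, b) ∈ E) with hN
  have hsum : E.card = ∑ a : Fin (q*(q^2+1)), (N a).card := by
    rw [Finset.card_eq_sum_card_fiberwise (f := Prod.fst) (t := Finset.univ)
      (fun x _ => Finset.mem_univ _)]
    refine Finset.sum_congr rfl fun a _ => ?_
    apply Finset.card_bij (fun x _ => x.2)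
    · rintro ⟨x1, x2⟩ hx
      simp only [Finset.mem_filter] at hx
      simp only [hN, Finset.mem_filter, Finset.mem_univ, true_and]
      rcases hx with ⟨hx1, hx2⟩
      subst hx2
      exact hx1
    · rintro ⟨x1, x2⟩ hx ⟨y1, y2⟩ hy hxy
      simp only [Finset.mem_filter] at hx hy
      simp only at hxy
      ext
      · simp [hx.2, hy.2]
      · simp [hxy]
    · intro b hb
      simp only [hN, Finset.mem_filter, Finset.mem_univ, true_and] at hb
      exact ⟨(a, b), by simp [hb], rfl⟩
  have htri : ∑ a : Fin (q*(q^2+1)), ((N a).card).choose 3 ≤ (q^2+1).choose 3 := by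
    have hdisj : ∀ a ∈ (Finset.univ : Finset (Fin (q*(q^2+1)))), ∀ a' ∈ (Finset.univ : Finset (Fin (q*(q^2+1)))),
        a ≠ a' → Disjoint ((N a).powersetCard 3) ((N a').powersetCard 3) := by
      intro a _ a' _ hne
      rw [Finset.disjoint_left]
      intro T hT hT'
      rw [Finset.mem_powersetCard] at hT hT'
      have hsub : T ⊆ Finset.univ.filter (fun b => (a, b) ∈ E ∧ (a', b) ∈ E) := by
        intro b hb
        have h1 := hT.1 hb
        have h2 := hT'.1 hb
        simp only [hN, Finset.mem_filter, Finset.mem_univ, true_and] at h1 h2 ⊢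
        exact ⟨h1, h2⟩
      have := Finset.card_le_card hsub
      have := hE a a' hne
      omega
    have e1 : ∑ a : Fin (q*(q^2+1)), ((N a).card).choose 3
        = (Finset.univ.biUnion (fun a : Fin (q*(q^2+1)) => (N a).powersetCard 3)).card := by
      rw [Finset.card_biUnion hdisj]
      refine Finset.sum_congr rfl fun a _ => ?_
      rw [Finset.card_powersetCard]
    have e2 : (Finset.univ.biUnion (fun a : Fin (q*(q^2+1)) => (N a).powersetCard 3)).card
        ≤ ((Finset.univ : Finset (Fin (q^2+1))).powersetCard 3).card := by
      apply Finset.card_le_card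
      intro T hT
      rw [Finset.mem_biUnion] at hT
      obtain ⟨a, _, hT⟩ := hT
      rw [Finset.mem_powersetCard] at hT ⊢
      exact ⟨Finset.subset_univ _, hT.2⟩
    have e3 : ((Finset.univ : Finset (Fin (q^2+1))).powersetCard 3).card = (q^2+1).choose 3 := by
      rw [Finset.card_powersetCard, Finset.card_univ, Fintype.card_fin]
    omega
  have hconv : ∀ a : Fin (q*(q^2+1)),
      (q+1).choose 3 + (N a).card * (q+1).choose 2
        ≤ ((N a).card).choose 3 + (q+1) * (q+1).choose 2 := fun a => choose_conv _ _
  have hsum2 : (q*(q^2+1)) * ((q+1).choose 3) + E.card * ((q+1).choose 2)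
      ≤ (q^2+1).choose 3 + (q*(q^2+1)) * ((q+1) * (q+1).choose 2) := by
    have h1 : ∑ a : Fin (q*(q^2+1)), ((q+1).choose 3 + (N a).card * (q+1).choose 2)
        ≤ ∑ a : Fin (q*(q^2+1)), (((N a).card).choose 3 + (q+1) * (q+1).choose 2) :=
      Finset.sum_le_sum (fun a _ => hconv a)
    rw [Finset.sum_add_distrib, Finset.sum_add_distrib, Finset.sum_const, Finset.sum_const,
      ← Finset.sum_mul] at h1
    simp only [Finset.card_univ, Fintype.card_fin, smul_eq_mul] at h1
    rw [hsum]
    omega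
  rw [key_id q hq] at hsum2
  have hEle : E.card * ((q+1).choose 2) ≤ ((q*(q^2+1)) * (q+1)) * ((q+1).choose 2) := by
    have : (q*(q^2+1)) * ((q+1) * (q+1).choose 2) = ((q*(q^2+1)) * (q+1)) * ((q+1).choose 2) := by
      ring
    omega
  have hpos : 0 < (q+1).choose 2 := Nat.choose_pos (by omega)
  have := Nat.le_of_mul_le_mul_right hEle hpos
  calc E.card ≤ (q*(q^2+1)) * (q+1) := this
    _ = (q^2+q)*(q^2+1) := by ring

lemma lower_family (q : ℕ) (hq : 2 ≤ q) (P : Type) [Fintype P] [DecidableEq P]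
    (hP : Fintype.card P = q^2+1) (F : Finset (Finset P))
    (hsize : ∀ c ∈ F, c.card = q+1)
    (hint : ∀ c ∈ F, ∀ c' ∈ F, c ≠ c' → (c ∩ c').card ≤ 2)
    (htri : ∀ T : Finset P, T.card = 3 → ∃ c ∈ F, T ⊆ c) :
    ∃ E : Finset (Fin (q*(q^2+1)) × Fin (q^2+1)),
      (∀ a a' : Fin (q*(q^2+1)), a ≠ a' →
        (Finset.univ.filter (fun b : Fin (q^2+1) => (a, b) ∈ E ∧ (a', b) ∈ E)).card < 3) ∧
      E.card = (q^2+q)*(q^2+1) := by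
  classical
  have hdisj : ∀ c ∈ F, ∀ c' ∈ F, c ≠ c' →
      Disjoint (c.powersetCard 3) (c'.powersetCard 3) := by
    intro c hc c' hc' hne
    rw [Finset.disjoint_left]
    intro T hT hT'
    rw [Finset.mem_powersetCard] at hT hT'
    have hsub : T ⊆ c ∩ c' := fun b hb => Finset.mem_inter.2 ⟨hT.1 hb, hT'.1 hb⟩
    have := Finset.card_le_card hsub
    have := hint c hc c' hc' hne
    omega
  have hcover : (Finset.univ : Finset P).powersetCard 3 =
      F.biUnion (fun c => c.powersetCard 3) := by
    ext T
    simp only [Finset.mem_powersetCard, Finset.mem_biUnion]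
    constructor
    · rintro ⟨-, hT3⟩
      obtain ⟨c, hc, hTc⟩ := htri T hT3
      exact ⟨c, hc, hTc, hT3⟩
    · rintro ⟨c, -, hTc, hT3⟩
      exact ⟨Finset.subset_univ _, hT3⟩
  have hFcard : F.card = q*(q^2+1) := by
    have h1 : (q^2+1).choose 3 = F.card * ((q+1).choose 3) := by
      calc (q^2+1).choose 3 = ((Finset.univ : Finset P).powersetCard 3).card := by
            rw [Finset.card_powersetCard, Finset.card_univ, hP]
        _ = ∑ c ∈ F, (c.powersetCard 3).card := by rw [hcover, Finset.card_biUnion hdisj]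
        _ = ∑ c ∈ F, (q+1).choose 3 := Finset.sum_congr rfl fun c hc => by
            rw [Finset.card_powersetCard, hsize c hc]
        _ = F.card * ((q+1).choose 3) := by rw [Finset.sum_const, smul_eq_mul]
    have h2 := key_id q (by omega)
    have hpos : 0 < (q+1).choose 3 := Nat.choose_pos (by omega)
    have : F.card * ((q+1).choose 3) = (q*(q^2+1)) * ((q+1).choose 3) := by omega
    exact Nat.eq_of_mul_eq_mul_right hpos this
  have h1 : Fintype.card {c // c ∈ F} = q*(q^2+1) := by
    rw [Fintype.card_coe, hFcard]
  let eC : Fin (q*(q^2+1)) ≃ {c // c ∈ F} := (Fintype.equivFinOfCardEq h1).symm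
  let eP : Fin (q^2+1) ≃ P := (Fintype.equivFinOfCardEq hP).symm
  refine ⟨Finset.univ.filter (fun ab : Fin (q*(q^2+1)) × Fin (q^2+1) =>
    eP ab.2 ∈ (eC ab.1 : Finset P)), ?_, ?_⟩
  · intro a a' ha
    have hne : (eC a : Finset P) ≠ (eC a' : Finset P) := by
      intro h
      exact ha (eC.injective (Subtype.ext h))
    have hsub : (Finset.univ.filter (fun b : Fin (q^2+1) =>
        (a, b) ∈ Finset.univ.filter (fun ab : Fin (q*(q^2+1)) × Fin (q^2+1) =>
          eP ab.2 ∈ (eC ab.1 : Finset P)) ∧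
        (a', b) ∈ Finset.univ.filter (fun ab : Fin (q*(q^2+1)) × Fin (q^2+1) =>
          eP ab.2 ∈ (eC ab.1 : Finset P)))).card ≤ ((eC a : Finset P) ∩ (eC a' : Finset P)).card := by
      apply Finset.card_le_card_of_injOn (fun b => eP b)
      · intro b hb
        simp only [Finset.coe_filter, Finset.mem_filter, Finset.mem_univ, true_and, Set.mem_setOf_eq] at hb
        exact Finset.mem_inter.2 ⟨hb.1, hb.2⟩
      · intro b _ b' _ h
        exact eP.injective h
    have := hint _ (eC a).2 _ (eC a').2 hne
    omega
  · rw [Finset.card_filter, Fintype.sum_prod_type]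
    have hinner : ∀ a : Fin (q*(q^2+1)),
        (∑ b : Fin (q^2+1), if eP b ∈ (eC a : Finset P) then 1 else 0) = q + 1 := by
      intro a
      rw [← Finset.card_filter]
      have : (Finset.univ.filter (fun b : Fin (q^2+1) => eP b ∈ (eC a : Finset P))).card
          = ((eC a : Finset P)).card := by
        apply Finset.card_bij (fun b _ => eP b)
        · intro b hb
          simp only [Finset.mem_filter] at hb
          exact hb.2
        · intro b _ b' _ h
          exact eP.injective h
        · intro y hy
          refine ⟨eP.symm y, ?_, by simp⟩
          simp [hy]
        
      rw [this, hsize _ (eC a).2]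
    rw [Finset.sum_congr rfl (fun a _ => hinner a), Finset.sum_const]
    simp only [Finset.card_univ, Fintype.card_fin, smul_eq_mul]
    ring

open Polynomial

structure FData (K : Type) [Field K] [Fintype K] (q : ℕ) : Prop where
  hq : 2 ≤ q
  hcard : Fintype.card K = q^2
  hfrob : ∀ x y : K, (x+y)^q = x^q + y^q
  hfrobX : ∀ A B : Polynomial K, (A+B)^q = A^q + B^q

namespace FData

variable {K : Type} [Field K] [Fintype K] [DecidableEq K] {q : ℕ}

lemma q0 (hF : FData K q) : q ≠ 0 := by have := hF.hq; omega

lemma powcard (hF : FData K q) (x : K) : x^(q^2) = x := by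
  have := FiniteField.pow_card x
  rwa [hF.hcard] at this

lemma qq (hF : FData K q) (x : K) : (x^q)^q = x := by
  rw [← pow_mul, ← pow_two, powcard hF]

lemma neg_pow_q (hF : FData K q) (x : K) : (-x)^q = -x^q := by
  have h := hF.hfrob x (-x)
  simp only [add_neg_cancel] at h
  have h0 : (0:K)^q = 0 := zero_pow (q0 hF)
  rw [h0] at h
  linear_combination -h

lemma sub_pow_q (hF : FData K q) (x y : K) : (x-y)^q = x^q - y^q := by
  rw [sub_eq_add_neg, hF.hfrob, neg_pow_q hF, ← sub_eq_add_neg]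

lemma neg_pow_qX (hF : FData K q) (A : K[X]) : (-A)^q = -A^q := by
  have h := hF.hfrobX A (-A)
  simp only [add_neg_cancel] at h
  have h0 : (0:K[X])^q = 0 := zero_pow (q0 hF)
  rw [h0] at h
  linear_combination -h

lemma sub_pow_qX (hF : FData K q) (A B : K[X]) : (A-B)^q = A^q - B^q := by
  rw [sub_eq_add_neg, hF.hfrobX, neg_pow_qX hF, ← sub_eq_add_neg]

lemma norm_q (hF : FData K q) (x : K) : (x^(q+1))^q = x^(q+1) := by
  rw [pow_succ, mul_pow, qq hF, mul_comm, ← pow_succ]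

/-- The subfield elements: count of `x` with `x^q = x` is `q`. -/
lemma card_S (hF : FData K q) :
    (Finset.univ.filter (fun x : K => x^q = x)).card = q := by
  have h1q : 1 < q := hF.hq
  have hfdeg : (X^q - X : K[X]).natDegree = q :=
    FiniteField.X_pow_card_sub_X_natDegree_eq K h1q
  have hfne : (X^q - X : K[X]) ≠ 0 := FiniteField.X_pow_card_sub_X_ne_zero K h1q
  have h1q2 : 1 < q^2 := by nlinarith
  have hgdeg : (X^(q^2) - X : K[X]).natDegree = q^2 :=
    FiniteField.X_pow_card_sub_X_natDegree_eq K h1q2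
  have hgne : (X^(q^2) - X : K[X]) ≠ 0 := FiniteField.X_pow_card_sub_X_ne_zero K h1q2
  have hgroots : (X^(q^2) - X : K[X]).roots = Finset.univ.val := by
    have := FiniteField.roots_X_pow_card_sub_X K
    rwa [hF.hcard] at this
  have hfq : (X^q - X : K[X])^q = X^(q^2) - X^q := by
    rw [sub_pow_qX hF, ← pow_mul, ← pow_two]
  have hq1 : q - 1 + 1 = q := by omega
  have hdvd : (X^q - X : K[X]) ∣ (X^(q^2) - X : K[X]) := by
    refine ⟨(X^q - X)^(q-1) + 1, ?_⟩
    have h2 : (X^q - X : K[X]) * ((X^q - X)^(q-1) + 1) = (X^q - X)^q + (X^q - X) := by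
      rw [mul_add, mul_one, ← pow_succ', hq1]
    rw [h2, hfq]
    ring
  have hsplitsg : (X^(q^2) - X : K[X]).Splits := by
    rw [splits_iff_card_roots, hgroots, hgdeg]
    show Finset.univ.card = q^2
    rw [Finset.card_univ, hF.hcard]
  have hsplitsf : (X^q - X : K[X]).Splits :=
    hsplitsg.of_dvd hgne hdvd
  have hcardroots : Multiset.card (X^q - X : K[X]).roots = q := by
    rw [splits_iff_card_roots] at hsplitsf
    rw [hsplitsf, hfdeg]
  have hnodup : (X^q - X : K[X]).roots.Nodup := by
    have hle : (X^q - X : K[X]).roots ≤ (X^(q^2) - X : K[X]).roots :=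
      Polynomial.roots.le_of_dvd hgne hdvd
    rw [hgroots] at hle
    exact Multiset.nodup_of_le hle Finset.univ.nodup
  have hset : Finset.univ.filter (fun x : K => x^q = x) = (X^q - X : K[X]).roots.toFinset := by
    ext x
    simp only [Finset.mem_filter, Finset.mem_univ, true_and, Multiset.mem_toFinset,
      Polynomial.mem_roots hfne, IsRoot.def]
    simp [sub_eq_zero]
  rw [hset, Multiset.toFinset_card_of_nodup hnodup, hcardroots]


/-- Fibers of the norm map over nonzero subfield elements have exactly `q+1` elements. -/
lemma norm_fiber (hF : FData K q) (s : K) (hs : s^q = s) (hs0 : s ≠ 0) :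
    (Finset.univ.filter (fun u : K => u^(q+1) = s)).card = q+1 := by
  have hq0 : q ≠ 0 := q0 hF
  -- fiber bound via roots of X^(q+1) - C s'
  have hle : ∀ s' : K, (Finset.univ.filter (fun u : K => u^(q+1) = s')).card ≤ q+1 := by
    intro s'
    have hsub : Finset.univ.filter (fun u : K => u^(q+1) = s')
        ⊆ (Polynomial.nthRoots (q+1) s').toFinset := by
      intro u hu
      simp only [Finset.mem_filter, Finset.mem_univ, true_and] at hu
      rw [Multiset.mem_toFinset, Polynomial.mem_nthRoots (by omega : 0 < q+1)]
      exact hu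
    calc (Finset.univ.filter (fun u : K => u^(q+1) = s')).card
        ≤ (Polynomial.nthRoots (q+1) s').toFinset.card := Finset.card_le_card hsub
      _ ≤ Multiset.card (Polynomial.nthRoots (q+1) s') := Multiset.toFinset_card_le _
      _ ≤ q+1 := Polynomial.card_nthRoots _ _
  -- partition of K \ {0} by norm values in S \ {0}
  set T : Finset K := (Finset.univ.filter (fun x : K => x^q = x)).erase 0 with hT
  have hTcard : T.card = q - 1 := by
    rw [hT, Finset.card_erase_of_mem, card_S hF]
    simp [zero_pow hq0]
  have hmaps : ∀ u ∈ (Finset.univ : Finset K).erase 0, u^(q+1) ∈ T := by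
    intro u hu
    rw [Finset.mem_erase] at hu
    rw [hT, Finset.mem_erase]
    refine ⟨pow_ne_zero _ hu.1, ?_⟩
    simp only [Finset.mem_filter, Finset.mem_univ, true_and]
    exact norm_q hF u
  have hpart : ((Finset.univ : Finset K).erase 0).card
      = ∑ s' ∈ T, (((Finset.univ : Finset K).erase 0).filter (fun u => u^(q+1) = s')).card :=
    Finset.card_eq_sum_card_fiberwise hmaps
  have hfe : ∀ s' ∈ T, ((Finset.univ : Finset K).erase 0).filter (fun u => u^(q+1) = s')
      = Finset.univ.filter (fun u : K => u^(q+1) = s') := by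
    intro s' hs'
    rw [hT, Finset.mem_erase] at hs'
    ext u
    simp only [Finset.mem_filter, Finset.mem_erase, Finset.mem_univ, true_and, and_true]
    constructor
    · rintro ⟨-, h⟩; exact h
    · intro h
      refine ⟨?_, h⟩
      rintro rfl
      rw [zero_pow (by omega : q+1 ≠ 0)] at h
      exact hs'.1 h.symm
  have hcard0 : ((Finset.univ : Finset K).erase 0).card = q^2 - 1 := by
    rw [Finset.card_erase_of_mem (Finset.mem_univ _), Finset.card_univ, hF.hcard]
  -- now show each fiber has exactly q+1 elements
  by_contra hne
  have hlt : (Finset.univ.filter (fun u : K => u^(q+1) = s)).card < q+1 :=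
    lt_of_le_of_ne (hle s) hne
  have hsT : s ∈ T := by
    rw [hT, Finset.mem_erase]
    exact ⟨hs0, by simp [hs]⟩
  have hsum_lt : ∑ s' ∈ T, (((Finset.univ : Finset K).erase 0).filter
      (fun u => u^(q+1) = s')).card < ∑ s' ∈ T, (q+1) := by
    apply Finset.sum_lt_sum
    · intro s' hs'
      rw [hfe s' hs']
      exact hle s'
    · exact ⟨s, hsT, by rw [hfe s hsT]; exact hlt⟩
  rw [Finset.sum_const, smul_eq_mul, hTcard] at hsum_lt
  rw [← hpart, hcard0] at hsum_lt
  have h2 : 2 ≤ q := hF.hq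
  have : (q-1) * (q+1) = q^2 - 1 := by
    obtain ⟨r, rfl⟩ : ∃ r, q = r + 2 := ⟨q - 2, by omega⟩
    have : (r+2)^2 = r^2 + 4*r + 4 := by ring
    rw [this]
    have h3 : r + 2 - 1 = r + 1 := by omega
    rw [h3]
    have h4 : (r+1) * (r+2+1) = r^2 + 4*r + 3 := by ring
    omega
  omega

/-- Fibers of `x ↦ b x^q + b^q x` style affine equations have exactly `q` solutions. -/
lemma lin_fiber (hF : FData K q) (b : K) (hb : b ≠ 0) (c : K) (hc : c^q = c) :
    (Finset.univ.filter (fun x : K => b*x^q + b^q*x + c = 0)).card = q := by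
  have hq0 : q ≠ 0 := q0 hF
  have hq2 : 2 ≤ q := hF.hq
  set L : K → K := fun x => b*x^q + b^q*x with hL
  have hadd : ∀ x y : K, L (x+y) = L x + L y := by
    intro x y
    simp only [hL, hF.hfrob]
    ring
  have hsub : ∀ x y : K, L (x-y) = L x - L y := by
    intro x y
    simp only [hL, sub_pow_q hF]
    ring
  have hSq : ∀ x : K, (L x)^q = L x := by
    intro x
    simp only [hL, hF.hfrob, mul_pow, qq hF]
    ring
  -- kernel bound via polynomial
  set Pb : K[X] := C b * X^q + C (b^q) * X with hPb
  have hPbne : Pb ≠ 0 := by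
    have hco : Pb.coeff q = b := by
      rw [hPb, Polynomial.coeff_add, Polynomial.coeff_C_mul, Polynomial.coeff_C_mul,
        Polynomial.coeff_X_pow, Polynomial.coeff_X_of_ne_one (by omega : q ≠ 1)]
      simp
    intro h
    rw [h, Polynomial.coeff_zero] at hco
    exact hb hco.symm
  have hPbdeg : Pb.natDegree ≤ q := by
    rw [hPb]
    apply le_trans (Polynomial.natDegree_add_le _ _)
    simp only [max_le_iff]
    constructor
    · apply le_trans (Polynomial.natDegree_C_mul_le _ _)
      simp
    · apply le_trans (Polynomial.natDegree_C_mul_le _ _)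
      simp [Polynomial.natDegree_X_le]
      omega
  have hker_le : (Finset.univ.filter (fun x : K => L x = 0)).card ≤ q := by
    have hsub2 : Finset.univ.filter (fun x : K => L x = 0) ⊆ Pb.roots.toFinset := by
      intro x hx
      simp only [Finset.mem_filter, Finset.mem_univ, true_and] at hx
      rw [Multiset.mem_toFinset, Polynomial.mem_roots hPbne, IsRoot.def, hPb]
      simp only [Polynomial.eval_add, Polynomial.eval_mul, Polynomial.eval_C,
        Polynomial.eval_pow, Polynomial.eval_X]
      rw [hL] at hx
      exact hx
    calc (Finset.univ.filter (fun x : K => L x = 0)).card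
        ≤ Pb.roots.toFinset.card := Finset.card_le_card hsub2
      _ ≤ Multiset.card Pb.roots := Multiset.toFinset_card_le _
      _ ≤ Pb.natDegree := Polynomial.card_roots' Pb
      _ ≤ q := hPbdeg
  -- image is inside S
  set Im : Finset K := Finset.univ.image L with hIm
  have hImS : Im ⊆ Finset.univ.filter (fun x : K => x^q = x) := by
    intro y hy
    rw [hIm, Finset.mem_image] at hy
    obtain ⟨x, -, rfl⟩ := hy
    simp only [Finset.mem_filter, Finset.mem_univ, true_and]
    exact hSq x
  have hImle : Im.card ≤ q := le_trans (Finset.card_le_card hImS) (le_of_eq (card_S hF))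
  -- fibers over image have equal size
  have hfib : ∀ y ∈ Im, (Finset.univ.filter (fun x : K => L x = y)).card
      = (Finset.univ.filter (fun x : K => L x = 0)).card := by
    intro y hy
    rw [hIm, Finset.mem_image] at hy
    obtain ⟨x0, -, hx0⟩ := hy
    apply Finset.card_bij (fun x _ => x - x0)
    · intro x hx
      simp only [Finset.mem_filter, Finset.mem_univ, true_and] at hx ⊢
      rw [hsub, hx, hx0, sub_self]
    · intro x hx x' hx' h
      have : x - x0 + x0 = x' - x0 + x0 := by rw [h]
      simpa using this
    · intro z hz
      simp only [Finset.mem_filter, Finset.mem_univ, true_and] at hz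
      refine ⟨z + x0, ?_, by ring⟩
      simp only [Finset.mem_filter, Finset.mem_univ, true_and]
      rw [hadd, hz, hx0, zero_add]
  have hpart : (Finset.univ : Finset K).card
      = ∑ y ∈ Im, ((Finset.univ : Finset K).filter (fun x => L x = y)).card :=
    Finset.card_eq_sum_card_fiberwise (fun x _ => by rw [hIm]; exact Finset.mem_image_of_mem L (Finset.mem_univ x))
  have htot : q^2 = Im.card * (Finset.univ.filter (fun x : K => L x = 0)).card := by
    rw [← hF.hcard, ← Finset.card_univ]
    rw [hpart, Finset.sum_congr rfl hfib, Finset.sum_const, smul_eq_mul]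
  -- conclude both are q
  have hkq : (Finset.univ.filter (fun x : K => L x = 0)).card = q := by
    by_contra h
    have h1 : (Finset.univ.filter (fun x : K => L x = 0)).card < q := by
      have := hker_le; omega
    have h2 : Im.card * (Finset.univ.filter (fun x : K => L x = 0)).card
        ≤ q * (Finset.univ.filter (fun x : K => L x = 0)).card :=
      Nat.mul_le_mul_right _ hImle
    have h3 : q * (Finset.univ.filter (fun x : K => L x = 0)).card < q * q :=
      mul_lt_mul_of_pos_left h1 (by omega)
    have h4 : q^2 = q * q := by ring
    omega
  have hImq : Im.card = q := by
    rw [hkq] at htot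
    have h4 : q * q = Im.card * q := by rw [← htot]; ring
    exact (Nat.eq_of_mul_eq_mul_right (show 0 < q by omega) h4).symm
  have hImeq : Im = Finset.univ.filter (fun x : K => x^q = x) :=
    Finset.eq_of_subset_of_card_le hImS (by rw [hImq, card_S hF])
  have hcmem : -c ∈ Im := by
    rw [hImeq]
    simp only [Finset.mem_filter, Finset.mem_univ, true_and]
    rw [neg_pow_q hF, hc]
  have hval := hfib _ hcmem
  rw [hkq] at hval
  have hfe : Finset.univ.filter (fun x : K => b*x^q + b^q*x + c = 0)
      = Finset.univ.filter (fun x : K => L x = -c) := by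
    ext x
    simp only [Finset.mem_filter, Finset.mem_univ, true_and, hL]
    constructor
    · intro h; linear_combination h
    · intro h; linear_combination h
  rw [hfe]
  exact hval

end FData


section Circles
variable {K : Type} [Field K] [Fintype K] [DecidableEq K]

/-- The defining equation of a circ with parameters `v = (a, b, c)`. -/
def ceq (q : ℕ) (v : K × K × K) (x : K) : K :=
  v.1 * x^(q+1) + v.2.1 * x^q + v.2.1^q * x + v.2.2

/-- The circ as a set of points of `Option K` (with `none = ∞`). -/
def circ (q : ℕ) (v : K × K × K) : Finset (Option K) :=
  (if v.1 = 0 then {(none : Option K)} else ∅)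
    ∪ (Finset.univ.filter (fun x : K => ceq q v x = 0)).image some

/-- Nondegeneracy of circ parameters. -/
def Nondeg (q : ℕ) (v : K × K × K) : Prop :=
  v.1^q = v.1 ∧ v.2.2^q = v.2.2 ∧ v.2.1^(q+1) ≠ v.1 * v.2.2

/-- Scaling of circ parameters. -/
def psmul (l : K) (v : K × K × K) : K × K × K := (l * v.1, l * v.2.1, l * v.2.2)

lemma mem_circ_none {q : ℕ} {v : K × K × K} : (none : Option K) ∈ circ q v ↔ v.1 = 0 := by
  simp only [circ, Finset.mem_union, Finset.mem_image]
  constructor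
  · rintro (h | ⟨x, -, h⟩)
    · by_cases h1 : v.1 = 0
      · exact h1
      · simp [h1] at h
    · simp at h
  · intro h
    left
    simp [h]

lemma mem_circ_some {q : ℕ} {v : K × K × K} {x : K} :
    some x ∈ circ q v ↔ ceq q v x = 0 := by
  simp only [circ, Finset.mem_union, Finset.mem_image]
  constructor
  · rintro (h | ⟨y, hy, h⟩)
    · by_cases h1 : v.1 = 0 <;> simp [h1] at h
    · simp only [Finset.mem_filter, Finset.mem_univ, true_and] at hy
      rcases Option.some.inj h with rfl
      exact hy
  · intro h
    right
    exact ⟨x, by simp [h], rfl⟩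

variable {q : ℕ}

lemma psmul_nondeg (hF : FData K q) {l : K} (hl : l^q = l) (hl0 : l ≠ 0) {v : K × K × K}
    (hv : Nondeg q v) : Nondeg q (psmul l v) := by
  obtain ⟨a, b, c⟩ := v
  obtain ⟨ha, hc, hnd⟩ := hv
  refine ⟨?_, ?_, ?_⟩
  · simp only [psmul, mul_pow, hl, ha]
  · simp only [psmul, mul_pow, hl, hc]
  · simp only [psmul]
    intro h
    apply hnd
    have hexp : (l*b)^(q+1) = l^(q+1) * b^(q+1) := by rw [mul_pow]
    have hl2 : l^(q+1) = l * l := by rw [pow_succ, hl]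
    rw [hexp, hl2] at h
    have h2 : l * l * b^(q+1) = l * l * (a * c) := by rw [h]; ring
    exact mul_left_cancel₀ (mul_ne_zero hl0 hl0) h2

lemma circle_psmul (hF : FData K q) {l : K} (hl : l^q = l) (hl0 : l ≠ 0) (v : K × K × K) :
    circ q (psmul l v) = circ q v := by
  obtain ⟨a, b, c⟩ := v
  ext p
  cases p with
  | none =>
    rw [mem_circ_none, mem_circ_none]
    simp only [psmul]
    constructor
    · intro h
      rcases mul_eq_zero.mp h with h | h
      · exact absurd h hl0
      · exact h
    · intro h; rw [h, mul_zero]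
  | some x =>
    rw [mem_circ_some, mem_circ_some]
    have hkey : ceq q (psmul l (a,b,c)) x = l * ceq q (a,b,c) x := by
      simp only [ceq, psmul, mul_pow, hl]
      ring
    rw [hkey]
    constructor
    · intro h
      rcases mul_eq_zero.mp h with h | h
      · exact absurd h hl0
      · exact h
    · intro h; rw [h, mul_zero]

/-- A structure encoding a point transformation together with its action on
circ parameters. -/
structure GMap (K : Type) [Field K] [Fintype K] [DecidableEq K] (q : ℕ) where
  pm : K × K × K → K × K × K
  pminv : K × K × K → K × K × K
  pt : Option K → Option K
  hptinj : Function.Injective pt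
  hnd : ∀ v, Nondeg q v → Nondeg q (pm v)
  hndinv : ∀ v, Nondeg q v → Nondeg q (pminv v)
  hlinv : ∀ v, Nondeg q v → pminv (pm v) = v
  hrinv : ∀ v, Nondeg q v → pm (pminv v) = v
  hmem : ∀ v, Nondeg q v → ∀ p, (p ∈ circ q v ↔ pt p ∈ circ q (pm v))
  hsc : ∀ (l : K) v, l^q = l → pm (psmul l v) = psmul l (pm v)

/-- Identity GMap. -/
def GMap.gid : GMap K q where
  pm := id
  pminv := id
  pt := id
  hptinj := fun _ _ h => h
  hnd := fun _ h => h
  hndinv := fun _ h => h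
  hlinv := fun _ _ => rfl
  hrinv := fun _ _ => rfl
  hmem := fun _ _ _ => Iff.rfl
  hsc := fun _ _ _ => rfl

/-- Composition of GMaps. -/
def GMap.comp (G2 G1 : GMap K q) : GMap K q where
  pm := G2.pm ∘ G1.pm
  pminv := G1.pminv ∘ G2.pminv
  pt := G2.pt ∘ G1.pt
  hptinj := G2.hptinj.comp G1.hptinj
  hnd := fun v hv => G2.hnd _ (G1.hnd _ hv)
  hndinv := fun v hv => G1.hndinv _ (G2.hndinv _ hv)
  hlinv := fun v hv => by
    simp only [Function.comp_apply]
    rw [G2.hlinv _ (G1.hnd _ hv), G1.hlinv _ hv]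
  hrinv := fun v hv => by
    simp only [Function.comp_apply]
    rw [G1.hrinv _ (G2.hndinv _ hv), G2.hrinv _ hv]
  hmem := fun v hv p => by
    simp only [Function.comp_apply]
    rw [G1.hmem _ hv p, G2.hmem _ (G1.hnd _ hv) (G1.pt p)]
  hsc := fun l v hl => by
    simp only [Function.comp_apply]
    rw [G1.hsc l v hl, G2.hsc l (G1.pm v) hl]

end Circles

section Elementary
open FData
variable {K : Type} [Field K] [Fintype K] [DecidableEq K] {q : ℕ}

/-- Parameter action of the translation `x ↦ x + t`. -/
def transP (q : ℕ) (t : K) (v : K × K × K) : K × K × K :=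
  (v.1, v.2.1 - v.1 * t, v.2.2 + v.1 * t^(q+1) - v.2.1 * t^q - v.2.1^q * t)

lemma transP_ceq (hF : FData K q) (t : K) {v : K × K × K} (ha : v.1^q = v.1) (x : K) :
    ceq q (transP q t v) (x + t) = ceq q v x := by
  obtain ⟨a, b, c⟩ := v
  simp only [ceq, transP] at ha ⊢
  have h1 : (x + t)^q = x^q + t^q := hF.hfrob x t
  have h2 : (b - a*t)^q = b^q - a * t^q := by
    rw [sub_pow_q hF, mul_pow, ha]
  simp only [pow_succ, h1, h2]
  ring

lemma transP_nondeg (hF : FData K q) (t : K) {v : K × K × K} (hv : Nondeg q v) :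
    Nondeg q (transP q t v) := by
  obtain ⟨a, b, c⟩ := v
  obtain ⟨ha, hc, hnd⟩ := hv
  simp only [Nondeg, transP] at ha hc hnd ⊢
  have h2 : (b - a*t)^q = b^q - a * t^q := by rw [sub_pow_q hF, mul_pow, ha]
  refine ⟨ha, ?_, ?_⟩
  · -- new c is in the subfield
    simp only [sub_pow_q hF, hF.hfrob, mul_pow, qq hF, norm_q hF, ha, hc]
    ring
  · -- nondegeneracy is preserved
    intro h
    apply hnd
    have hkey : (b - a*t)^(q+1) = b^(q+1) - a*c
        + a * (c + a * t^(q+1) - b * t^q - b^q * t) := by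
      simp only [pow_succ, h2]
      ring
    rw [hkey] at h
    linear_combination h

/-- Translation GMap. -/
def gtrans (hF : FData K q) (t : K) : GMap K q where
  pm := transP q t
  pminv := transP q (-t)
  pt := Option.map (· + t)
  hptinj := Option.map_injective (fun x y h => by simpa using h)
  hnd := fun v hv => transP_nondeg hF t hv
  hndinv := fun v hv => transP_nondeg hF (-t) hv
  hlinv := fun v hv => by
    obtain ⟨a, b, c⟩ := v
    obtain ⟨ha, hc, hnd⟩ := hv
    simp only [transP]
    have h2 : (b - a*t)^q = b^q - a * t^q := by rw [sub_pow_q hF, mul_pow, ha]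
    have h3 : (-t)^q = -t^q := neg_pow_q hF t
    simp only [Prod.mk.injEq]
    refine ⟨trivial, by ring, ?_⟩
    simp only [h2, h3, pow_succ]
    ring
  hrinv := fun v hv => by
    obtain ⟨a, b, c⟩ := v
    obtain ⟨ha, hc, hnd⟩ := hv
    simp only [transP]
    have h2 : (b - a*(-t))^q = b^q - a * (-t)^q := by rw [sub_pow_q hF, mul_pow, ha]
    have h3 : (-t)^q = -t^q := neg_pow_q hF t
    simp only [Prod.mk.injEq]
    refine ⟨trivial, by ring, ?_⟩
    simp only [h2, h3, pow_succ]
    ring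
  hmem := fun v hv p => by
    obtain ⟨ha, hc, hnd⟩ := hv
    cases p with
    | none =>
      simp only [Option.map_none]
      rw [mem_circ_none, mem_circ_none]
      rfl
    | some x =>
      simp only [Option.map_some]
      rw [mem_circ_some, mem_circ_some, transP_ceq hF t ha x]
  hsc := fun l v hl => by
    obtain ⟨a, b, c⟩ := v
    simp only [transP, psmul, mul_pow, hl, Prod.mk.injEq]
    refine ⟨trivial, by ring, by ring⟩

/-- Parameter action of the scaling `x ↦ s x`. -/
def scaleP (q : ℕ) (s : K) (v : K × K × K) : K × K × K :=
  (v.1, v.2.1 * s, v.2.2 * s^(q+1))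

lemma scaleP_nondeg (hF : FData K q) {s : K} (hs : s ≠ 0) {v : K × K × K} (hv : Nondeg q v) :
    Nondeg q (scaleP q s v) := by
  obtain ⟨a, b, c⟩ := v
  obtain ⟨ha, hc, hnd⟩ := hv
  refine ⟨ha, ?_, ?_⟩
  · simp only [scaleP, mul_pow, hc, norm_q hF]
  · simp only [scaleP]
    intro h
    apply hnd
    have h1 : (b*s)^(q+1) = b^(q+1) * s^(q+1) := by rw [mul_pow]
    rw [h1] at h
    have h2 : b^(q+1) * s^(q+1) = (a*c) * s^(q+1) := by rw [h]; ring
    exact mul_right_cancel₀ (pow_ne_zero _ hs) h2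

/-- Scaling GMap. -/
def gscale (hF : FData K q) (s : K) (hs : s ≠ 0) : GMap K q where
  pm := scaleP q s
  pminv := scaleP q s⁻¹
  pt := Option.map (fun x => s * x)
  hptinj := Option.map_injective (mul_right_injective₀ hs)
  hnd := fun v hv => scaleP_nondeg hF hs hv
  hndinv := fun v hv => scaleP_nondeg hF (inv_ne_zero hs) hv
  hlinv := fun v hv => by
    obtain ⟨a, b, c⟩ := v
    simp only [scaleP, Prod.mk.injEq]
    refine ⟨trivial, ?_, ?_⟩
    · field_simp
    · rw [mul_assoc, ← mul_pow, mul_inv_cancel₀ hs, one_pow, mul_one]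
  hrinv := fun v hv => by
    obtain ⟨a, b, c⟩ := v
    simp only [scaleP, Prod.mk.injEq]
    refine ⟨trivial, ?_, ?_⟩
    · field_simp
    · rw [mul_assoc, ← mul_pow, inv_mul_cancel₀ hs, one_pow, mul_one]
  hmem := fun v hv p => by
    obtain ⟨ha, hc, hnd⟩ := hv
    cases p with
    | none =>
      simp only [Option.map_none]
      rw [mem_circ_none, mem_circ_none]
      rfl
    | some x =>
      simp only [Option.map_some]
      rw [mem_circ_some, mem_circ_some]
      obtain ⟨a, b, c⟩ := v
      have hkey : ceq q (scaleP q s (a,b,c)) (s*x) = s^(q+1) * ceq q (a,b,c) x := by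
        simp only [ceq, scaleP, mul_pow, pow_succ]
        ring
      rw [hkey]
      constructor
      · intro h
        rw [h, mul_zero]
      · intro h
        rcases mul_eq_zero.mp h with h | h
        · exact absurd h (pow_ne_zero _ hs)
        · exact h
  hsc := fun l v hl => by
    obtain ⟨a, b, c⟩ := v
    simp only [scaleP, psmul, Prod.mk.injEq]
    refine ⟨trivial, by ring, by ring⟩

/-- The point map of the inversion. -/
def invPt : Option K → Option K := fun p =>
  match p with
  | none => some 0
  | some x => if x = 0 then none else some x⁻¹

lemma invPt_invPt (p : Option K) : invPt (invPt p) = p := by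
  match p with
  | none => simp [invPt]
  | some x =>
    by_cases hx : x = 0
    · simp [invPt, hx]
    · simp [invPt, hx, inv_eq_zero, inv_inv]

/-- Inversion GMap: `x ↦ x⁻¹`, `0 ↦ ∞`, `∞ ↦ 0`. -/
def ginv (hF : FData K q) : GMap K q where
  pm := fun v => (v.2.2, v.2.1^q, v.1)
  pminv := fun v => (v.2.2, v.2.1^q, v.1)
  pt := invPt
  hptinj := Function.LeftInverse.injective invPt_invPt
  hnd := fun v hv => by
    obtain ⟨a, b, c⟩ := v
    obtain ⟨ha, hc, hnd⟩ := hv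
    refine ⟨hc, ha, ?_⟩
    simp only
    intro h
    apply hnd
    have h1 : (b^q)^(q+1) = b^(q+1) := by
      rw [pow_succ, qq hF, mul_comm, ← pow_succ]
    rw [h1] at h
    rw [h, mul_comm]
  hndinv := fun v hv => by
    obtain ⟨a, b, c⟩ := v
    obtain ⟨ha, hc, hnd⟩ := hv
    refine ⟨hc, ha, ?_⟩
    simp only
    intro h
    apply hnd
    have h1 : (b^q)^(q+1) = b^(q+1) := by
      rw [pow_succ, qq hF, mul_comm, ← pow_succ]
    rw [h1] at h
    rw [h, mul_comm]
  hlinv := fun v hv => by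
    obtain ⟨a, b, c⟩ := v
    simp only [qq hF]
  hrinv := fun v hv => by
    obtain ⟨a, b, c⟩ := v
    simp only [qq hF]
  hmem := fun v hv p => by
    obtain ⟨a, b, c⟩ := v
    obtain ⟨ha, hc, hnd⟩ := hv
    have hq0 : q ≠ 0 := q0 hF
    cases p with
    | none =>
      have hpt : invPt (none : Option K) = some 0 := rfl
      rw [hpt, mem_circ_none, mem_circ_some]
      simp [ceq, zero_pow hq0, zero_pow (show q+1 ≠ 0 by omega)]
    | some x =>
      by_cases hx : x = 0
      · subst hx
        have hpt : invPt (some (0:K)) = none := by simp [invPt]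
        rw [hpt, mem_circ_some, mem_circ_none]
        simp [ceq, zero_pow hq0, zero_pow (show q+1 ≠ 0 by omega)]
      · have hpt : invPt (some x) = some x⁻¹ := by simp [invPt, hx]
        rw [hpt, mem_circ_some, mem_circ_some]
        have hkey : x^(q+1) * ceq q ((a,b,c).2.2, (a,b,c).2.1^q, (a,b,c).1) x⁻¹
            = ceq q (a,b,c) x := by
          simp only [ceq, qq hF, inv_pow]
          field_simp
          ring
        constructor
        · intro h
          have h2 : x^(q+1) * ceq q ((a,b,c).2.2, (a,b,c).2.1^q, (a,b,c).1) x⁻¹ = 0 := by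
            rw [hkey, h]
          rcases mul_eq_zero.mp h2 with h3 | h3
          · exact absurd h3 (pow_ne_zero _ hx)
          · exact h3
        · intro h
          rw [← hkey, h, mul_zero]
  hsc := fun l v hl => by
    obtain ⟨a, b, c⟩ := v
    simp only [psmul, mul_pow, hl]

end Elementary

section Geometry
open FData
variable {K : Type} [Field K] [Fintype K] [DecidableEq K] {q : ℕ}

/-- Reduce any three distinct points to `∞, 0, 1`. -/
lemma reduce (hF : FData K q) (p1 p2 p3 : Option K) (h12 : p1 ≠ p2) (h13 : p1 ≠ p3)
    (h23 : p2 ≠ p3) :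
    ∃ G : GMap K q, G.pt p1 = none ∧ G.pt p2 = some 0 ∧ G.pt p3 = some 1 := by
  obtain ⟨G1, hG1⟩ : ∃ G1 : GMap K q, G1.pt p1 = none := by
    cases p1 with
    | none => exact ⟨GMap.gid, rfl⟩
    | some t =>
      refine ⟨(ginv hF).comp (gtrans hF (-t)), ?_⟩
      show invPt (Option.map (· + (-t)) (some t)) = none
      simp [invPt]
  have h2n : G1.pt p2 ≠ none := by
    rw [← hG1]
    exact fun h => h12 (G1.hptinj h).symm
  have h3n : G1.pt p3 ≠ none := by
    rw [← hG1]
    exact fun h => h13 (G1.hptinj h).symm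
  obtain ⟨u, hu⟩ := Option.ne_none_iff_exists'.mp h2n
  obtain ⟨w, hw⟩ := Option.ne_none_iff_exists'.mp h3n
  have huw : u ≠ w := by
    intro h
    apply h23
    apply G1.hptinj
    rw [hu, hw, h]
  have hwu : w - u ≠ 0 := sub_ne_zero_of_ne (Ne.symm huw)
  have hwu' : (w - u)⁻¹ ≠ 0 := inv_ne_zero hwu
  refine ⟨((gscale hF (w-u)⁻¹ hwu').comp (gtrans hF (-u))).comp G1, ?_, ?_, ?_⟩
  · show (Option.map (fun x => (w-u)⁻¹ * x) (Option.map (· + (-u)) (G1.pt p1))) = none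
    rw [hG1]
    rfl
  · show (Option.map (fun x => (w-u)⁻¹ * x) (Option.map (· + (-u)) (G1.pt p2))) = some 0
    rw [hu]
    show some ((w-u)⁻¹ * (u + (-u))) = some 0
    rw [add_neg_cancel, mul_zero]
  · show (Option.map (fun x => (w-u)⁻¹ * x) (Option.map (· + (-u)) (G1.pt p3))) = some 1
    rw [hw]
    show some ((w-u)⁻¹ * (w + (-u))) = some 1
    rw [← sub_eq_add_neg, inv_mul_cancel₀ hwu]

/-- Circles through `∞, 0, 1` have parameters `(0, b, 0)` with `b^q = -b`. -/
lemma circ_012 (hF : FData K q) {v : K × K × K} (hv : Nondeg q v)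
    (hm8 : (none : Option K) ∈ circ q v) (hm0 : some (0:K) ∈ circ q v)
    (hm1 : some (1:K) ∈ circ q v) :
    v.1 = 0 ∧ v.2.2 = 0 ∧ v.2.1 ≠ 0 ∧ v.2.1^q = -v.2.1 := by
  obtain ⟨a, b, c⟩ := v
  obtain ⟨ha, hc, hnd⟩ := hv
  rw [mem_circ_none] at hm8
  rw [mem_circ_some] at hm0 hm1
  simp only at hm8
  have hq0 : q ≠ 0 := q0 hF
  simp only [ceq, zero_pow hq0, zero_pow (show q+1 ≠ 0 by omega), mul_zero, zero_add,
    add_zero, one_pow, mul_one] at hm0 hm1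
  -- hm0 : c = 0 (after simplification)
  have hc0 : c = 0 := by linear_combination hm0
  have ha0 : a = 0 := hm8
  have hbq : b^q = -b := by
    rw [ha0, hc0] at hm1
    linear_combination hm1
  have hb0 : b ≠ 0 := by
    intro h
    apply hnd
    rw [h, ha0]
    simp [zero_pow (show q+1 ≠ 0 by omega)]
  exact ⟨ha0, hc0, hb0, hbq⟩

/-- Two nondegenerate circles through three common points are proportional. -/
lemma prop_of_three (hF : FData K q) {p1 p2 p3 : Option K} (h12 : p1 ≠ p2) (h13 : p1 ≠ p3)
    (h23 : p2 ≠ p3) {v w : K × K × K} (hv : Nondeg q v) (hw : Nondeg q w)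
    (hv1 : p1 ∈ circ q v) (hv2 : p2 ∈ circ q v) (hv3 : p3 ∈ circ q v)
    (hw1 : p1 ∈ circ q w) (hw2 : p2 ∈ circ q w) (hw3 : p3 ∈ circ q w) :
    ∃ l : K, l^q = l ∧ l ≠ 0 ∧ w = psmul l v := by
  obtain ⟨G, hg1, hg2, hg3⟩ := reduce hF p1 p2 p3 h12 h13 h23
  have hv' := G.hnd v hv
  have hw' := G.hnd w hw
  have mv1 := (G.hmem v hv p1).mp hv1
  have mv2 := (G.hmem v hv p2).mp hv2
  have mv3 := (G.hmem v hv p3).mp hv3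
  have mw1 := (G.hmem w hw p1).mp hw1
  have mw2 := (G.hmem w hw p2).mp hw2
  have mw3 := (G.hmem w hw p3).mp hw3
  rw [hg1] at mv1 mw1
  rw [hg2] at mv2 mw2
  rw [hg3] at mv3 mw3
  obtain ⟨ev1, ev2, ev3, ev4⟩ := circ_012 hF hv' mv1 mv2 mv3
  obtain ⟨ew1, ew2, ew3, ew4⟩ := circ_012 hF hw' mw1 mw2 mw3
  set l : K := (G.pm w).2.1 / (G.pm v).2.1 with hldef
  have hl : l^q = l := by
    rw [hldef, div_pow, ev4, ew4, neg_div_neg_eq]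
  have hl0 : l ≠ 0 := div_ne_zero ew3 ev3
  have hsmul : G.pm w = psmul l (G.pm v) := by
    refine Prod.ext_iff.mpr ⟨?_, Prod.ext_iff.mpr ⟨?_, ?_⟩⟩
    · show (G.pm w).1 = l * (G.pm v).1
      rw [ev1, ew1, mul_zero]
    · show (G.pm w).2.1 = l * (G.pm v).2.1
      rw [hldef, div_mul_cancel₀ _ ev3]
    · show (G.pm w).2.2 = l * (G.pm v).2.2
      rw [ev2, ew2, mul_zero]
  have h5 : G.pm (psmul l v) = psmul l (G.pm v) := G.hsc l v hl
  have h6 : G.pm w = G.pm (psmul l v) := by rw [h5, hsmul]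
  have h7 := congrArg G.pminv h6
  rw [G.hlinv w hw, G.hlinv _ (psmul_nondeg hF hl hl0 hv)] at h7
  exact ⟨l, hl, hl0, h7⟩

/-- There exists a nonzero trace-zero element. -/
lemma exists_bzero (hF : FData K q) : ∃ b : K, b ≠ 0 ∧ b^q = -b := by
  by_contra hcon
  push_neg at hcon
  have hinj : Function.Injective (fun x : K => x^q + x) := by
    intro x y h
    simp only at h
    by_contra hne
    have hxy : x - y ≠ 0 := sub_ne_zero_of_ne hne
    apply hcon (x - y) hxy
    rw [sub_pow_q hF]
    linear_combination h
  have hmaps : ∀ x : K, (x^q + x) ∈ Finset.univ.filter (fun y : K => y^q = y) := by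
    intro x
    simp only [Finset.mem_filter, Finset.mem_univ, true_and]
    rw [hF.hfrob, qq hF]
    ring
  have hle : Fintype.card K ≤ q := by
    calc Fintype.card K = (Finset.univ : Finset K).card := (Finset.card_univ).symm
      _ ≤ (Finset.univ.filter (fun y : K => y^q = y)).card :=
        Finset.card_le_card_of_injOn _ (fun x _ => hmaps x) (fun x _ y _ h => hinj h)
      _ = q := card_S hF
  rw [hF.hcard] at hle
  have := hF.hq
  nlinarith

/-- Through any three distinct points there is a nondegenerate circle. -/
lemma exists_circ (hF : FData K q) {p1 p2 p3 : Option K} (h12 : p1 ≠ p2) (h13 : p1 ≠ p3)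
    (h23 : p2 ≠ p3) :
    ∃ v, Nondeg q v ∧ p1 ∈ circ q v ∧ p2 ∈ circ q v ∧ p3 ∈ circ q v := by
  obtain ⟨G, hg1, hg2, hg3⟩ := reduce hF p1 p2 p3 h12 h13 h23
  obtain ⟨b0, hb0, hb0q⟩ := exists_bzero hF
  have hq0 : q ≠ 0 := q0 hF
  have hw0 : Nondeg q ((0 : K), b0, (0:K)) := by
    refine ⟨zero_pow hq0, zero_pow hq0, ?_⟩
    simp only [mul_zero]
    exact pow_ne_zero _ hb0
  have hm8 : (none : Option K) ∈ circ q ((0:K), b0, (0:K)) := by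
    rw [mem_circ_none]
  have hm0 : some (0:K) ∈ circ q ((0:K), b0, (0:K)) := by
    rw [mem_circ_some]
    simp [ceq, zero_pow hq0, zero_pow (show q+1 ≠ 0 by omega)]
  have hm1 : some (1:K) ∈ circ q ((0:K), b0, (0:K)) := by
    rw [mem_circ_some]
    simp only [ceq, one_pow, mul_one, zero_mul, zero_add, add_zero]
    rw [hb0q]
    ring
  refine ⟨G.pminv ((0:K), b0, (0:K)), G.hndinv _ hw0, ?_, ?_, ?_⟩
  · rw [G.hmem _ (G.hndinv _ hw0), G.hrinv _ hw0, hg1]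
    exact hm8
  · rw [G.hmem _ (G.hndinv _ hw0), G.hrinv _ hw0, hg2]
    exact hm0
  · rw [G.hmem _ (G.hndinv _ hw0), G.hrinv _ hw0, hg3]
    exact hm1

end Geometry

section CircleCard
open FData
variable {K : Type} [Field K] [Fintype K] [DecidableEq K] {q : ℕ}

lemma card_circ (hF : FData K q) {v : K × K × K} (hv : Nondeg q v) :
    (circ q v).card = q + 1 := by
  obtain ⟨a, b, c⟩ := v
  obtain ⟨ha, hc, hnd⟩ := hv
  have hq0 : q ≠ 0 := q0 hF
  simp only at ha hc hnd
  by_cases ha0 : a = 0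
  · subst ha0
    have hb0 : b ≠ 0 := by
      intro h
      apply hnd
      rw [h]
      simp [zero_pow (show q+1 ≠ 0 by omega)]
    have hfeq : Finset.univ.filter (fun x : K => ceq q ((0:K),b,c) x = 0)
        = Finset.univ.filter (fun x : K => b*x^q + b^q*x + c = 0) := by
      ext x
      rw [Finset.mem_filter, Finset.mem_filter]
      simp only [Finset.mem_univ, true_and, ceq]
      constructor
      · intro h; linear_combination h
      · intro h; linear_combination h
    have hcirc : circ q ((0:K),b,c) = {(none : Option K)}
        ∪ (Finset.univ.filter (fun x : K => ceq q ((0:K),b,c) x = 0)).image some := by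
      rw [circ, if_pos rfl]
    rw [hcirc, Finset.card_union_of_disjoint]
    · rw [Finset.card_singleton, Finset.card_image_of_injective _ (Option.some_injective K),
        hfeq, lin_fiber hF b hb0 c hc]
      omega
    · rw [Finset.disjoint_left]
      intro p hp hp2
      rw [Finset.mem_singleton] at hp
      subst hp
      rw [Finset.mem_image] at hp2
      obtain ⟨x, -, hx⟩ := hp2
      exact absurd hx (Option.some_ne_none x)
  · have ha2 : a^2 ≠ 0 := pow_ne_zero _ ha0
    set s : K := (b^(q+1) - a*c)/(a^2) with hs
    have hsq : s^q = s := by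
      rw [hs, div_pow, sub_pow_q hF, mul_pow, norm_q hF, ha, hc, ← pow_mul, mul_comm 2 q,
        pow_mul, ha]
    have hs0 : s ≠ 0 := div_ne_zero (sub_ne_zero_of_ne hnd) ha2
    have h3 : a^2 * s = b^(q+1) - a*c := by
      rw [hs]
      field_simp
    have hkey : ∀ x : K, ceq q (a,b,c) x = 0 ↔ (x + b/a)^(q+1) = s := by
      intro x
      have h1 : (x + b/a)^q = x^q + b^q/a := by
        rw [hF.hfrob, div_pow, ha]
      have h2 : a^2 * ((x + b/a)^(q+1)) = a * ceq q (a,b,c) x + (b^(q+1) - a*c) := by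
        simp only [pow_succ, h1, ceq]
        field_simp
        ring
      constructor
      · intro h
        rw [h, mul_zero, zero_add] at h2
        rw [hs, eq_div_iff ha2]
        linear_combination h2
      · intro h
        rw [h] at h2
        have h4 : a * ceq q (a,b,c) x = 0 := by linear_combination h3 - h2
        exact (mul_eq_zero.mp h4).resolve_left ha0
    have hcirc : circ q (a,b,c)
        = (Finset.univ.filter (fun x : K => ceq q (a,b,c) x = 0)).image some := by
      rw [circ, if_neg ha0, Finset.empty_union]
    rw [hcirc, Finset.card_image_of_injective _ (Option.some_injective K)]
    have hbij : (Finset.univ.filter (fun x : K => ceq q (a,b,c) x = 0)).card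
        = (Finset.univ.filter (fun u : K => u^(q+1) = s)).card := by
      apply Finset.card_bij (fun x _ => x + b/a)
      · intro x hx
        simp only [Finset.mem_filter, Finset.mem_univ, true_and] at hx ⊢
        exact (hkey x).mp hx
      · intro x hx x' hx' h
        exact add_right_cancel h
      · intro u hu
        simp only [Finset.mem_filter, Finset.mem_univ, true_and] at hu
        refine ⟨u - b/a, ?_, by ring⟩
        simp only [Finset.mem_filter, Finset.mem_univ, true_and]
        rw [hkey]
        rw [sub_add_cancel]
        exact hu
    rw [hbij, norm_fiber hF s hsq hs0]

/-- The family of circles forms the block set of an inversive plane. -/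
lemma exists_family (hF : FData K q) :
    ∃ F : Finset (Finset (Option K)),
      (∀ c ∈ F, c.card = q+1) ∧
      (∀ c ∈ F, ∀ c' ∈ F, c ≠ c' → (c ∩ c').card ≤ 2) ∧
      (∀ T : Finset (Option K), T.card = 3 → ∃ c ∈ F, T ⊆ c) := by
  classical
  have h2q : 2 ≤ q := hF.hq
  refine ⟨((Finset.univ : Finset (K×K×K)).filter (fun v => Nondeg q v)).image (circ q),
    ?_, ?_, ?_⟩
  · intro c hc
    rw [Finset.mem_image] at hc
    obtain ⟨v, hv, rfl⟩ := hc
    rw [Finset.mem_filter] at hv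
    exact card_circ hF hv.2
  · intro c hc c' hc' hne
    rw [Finset.mem_image] at hc hc'
    obtain ⟨v, hv, rfl⟩ := hc
    obtain ⟨v', hv', rfl⟩ := hc'
    rw [Finset.mem_filter] at hv hv'
    by_contra hcon
    push_neg at hcon
    obtain ⟨T, hTsub, hT3⟩ := Finset.exists_subset_card_eq (s := circ q v ∩ circ q v') (n := 3) (by omega)
    rw [Finset.card_eq_three] at hT3
    obtain ⟨p1, p2, p3, h12, h13, h23, rfl⟩ := hT3
    have hmem : ∀ p ∈ ({p1, p2, p3} : Finset (Option K)),
        p ∈ circ q v ∧ p ∈ circ q v' := by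
      intro p hp
      have := hTsub hp
      rw [Finset.mem_inter] at this
      exact this
    have m1 := hmem p1 (by simp)
    have m2 := hmem p2 (by simp)
    have m3 := hmem p3 (by simp)
    obtain ⟨l, hl, hl0, hpr⟩ := prop_of_three hF h12 h13 h23 hv.2 hv'.2
      m1.1 m2.1 m3.1 m1.2 m2.2 m3.2
    apply hne
    rw [hpr, circle_psmul hF hl hl0]
  · intro T hT3
    rw [Finset.card_eq_three] at hT3
    obtain ⟨p1, p2, p3, h12, h13, h23, rfl⟩ := hT3
    obtain ⟨v, hv, hm1, hm2, hm3⟩ := exists_circ hF h12 h13 h23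
    refine ⟨circ q v, ?_, ?_⟩
    · rw [Finset.mem_image]
      exact ⟨v, by simp [Finset.mem_filter, hv], rfl⟩
    · intro p hp
      simp only [Finset.mem_insert, Finset.mem_singleton] at hp
      rcases hp with rfl | rfl | rfl
      · exact hm1
      · exact hm2
      · exact hm3

end CircleCard



/-- for a prime power `q`, `n = q² + 1` and `m = qn`,
`z(m, n, 2, 3) = (q² + q)·n`. -/
theorem zarankiewicz_inversive (q : ℕ) (hq : IsPrimePow q) :
    zar (q * (q ^ 2 + 1)) (q ^ 2 + 1) 3 = (q ^ 2 + q) * (q ^ 2 + 1) := by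
  obtain ⟨p, k, hp, hk, hpk⟩ := hq
  have hpp : p.Prime := Nat.prime_iff.mpr hp
  haveI : Fact p.Prime := ⟨hpp⟩
  have h2k : 2*k ≠ 0 := by omega
  letI : Fintype (GaloisField p (2*k)) := Fintype.ofFinite _
  letI : DecidableEq (GaloisField p (2*k)) := Classical.decEq _
  have hq2 : 2 ≤ q := by
    rw [← hpk]
    calc 2 ≤ p := hpp.two_le
      _ ≤ p^k := Nat.le_self_pow (by omega) p
  have hcard : Fintype.card (GaloisField p (2*k)) = q^2 := by
    rw [← Nat.card_eq_fintype_card, GaloisField.card p (2*k) h2k, mul_comm 2 k, pow_mul, hpk]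
  have hF : FData (GaloisField p (2*k)) q := by
    refine ⟨hq2, hcard, ?_, ?_⟩
    · intro x y
      rw [← hpk]
      exact add_pow_char_pow ..
    · intro A B
      rw [← hpk]
      exact add_pow_char_pow ..
  obtain ⟨Fam, hsize, hint, htri⟩ := exists_family hF
  apply zar_eq_of
  · intro E hE
    exact upper_bound q (by omega) E hE
  · have hP : Fintype.card (Option (GaloisField p (2*k))) = q^2+1 := by
      rw [Fintype.card_option, hcard]
    exact lower_family q hq2 (Option (GaloisField p (2*k))) hP Fam hsize hint htri
end

section
/- For every integer n ≥ 3, cp(n, 2) = n; that is, the minimum number of proper subsets A_1, ..., A_t ⊊ [n] such that every 2-element subset of [n] is contained in exactly one A_i equals n (the de Bruijn–Erdős theorem). -/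
theorem cp_lower (n : ℕ) (hn : 3 ≤ n) (P : Finset (Finset (Fin n)))
    (hP : IsCliquePartition n 2 P) : n ≤ P.card := by
  classical
  obtain ⟨h1, h2⟩ := hP
  letI : Membership (Fin n) {A // A ∈ P} := ⟨fun A p => p ∈ A.val⟩
  have key : ∀ {p q : Fin n}, p ≠ q → ∃! A : Finset (Fin n), A ∈ P ∧ p ∈ A ∧ q ∈ A := by
    intro p q hpq
    obtain ⟨A, ⟨hA, hsub⟩, huniq⟩ := h2 {p, q} (Finset.card_pair hpq)
    refine ⟨A, ⟨hA, hsub (by simp), hsub (by simp)⟩, ?_⟩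
    rintro B ⟨hB, hpB, hqB⟩
    refine huniq B ⟨hB, ?_⟩
    intro x hx
    simp only [Finset.mem_insert, Finset.mem_singleton] at hx
    rcases hx with rfl | rfl <;> assumption
  haveI : Configuration.HasLines (Fin n) {A // A ∈ P} :=
    { exists_point := by
        intro l
        by_contra h
        push_neg at h
        exact h1 l.1 l.2 (Finset.eq_univ_iff_forall.mpr h)
      exists_line := by
        intro p
        obtain ⟨q, hq, r, hr, hqr⟩ := Finset.one_lt_card.mp
          (show 1 < (Finset.univ.erase p).card by
            rw [Finset.card_erase_of_mem (Finset.mem_univ p), Finset.card_univ,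
              Fintype.card_fin]; omega)
        have hqp : q ≠ p := Finset.ne_of_mem_erase hq
        obtain ⟨A, ⟨hA, hqA, hrA⟩, _⟩ := key hqr
        by_cases hpA : p ∈ A
        · obtain ⟨s, hs⟩ : ∃ s, s ∉ A := by
            by_contra h
            push_neg at h
            exact h1 A hA (Finset.eq_univ_iff_forall.mpr h)
          have hsq : s ≠ q := fun h => hs (h ▸ hqA)
          obtain ⟨B, ⟨hB, hsB, hqB⟩, _⟩ := key hsq
          refine ⟨⟨B, hB⟩, fun hpB => ?_⟩
          have hpq' : p ≠ q := fun h => hqp h.symm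
          have hAB : A = B := (key hpq').unique ⟨hA, hpA, hqA⟩ ⟨hB, hpB, hqB⟩
          rw [hAB] at hs
          exact hs hsB
        · exact ⟨⟨A, hA⟩, hpA⟩
      eq_or_eq := by
        intro p₁ p₂ l₁ l₂ h11 h21 h12 h22
        by_cases hpq : p₁ = p₂
        · exact Or.inl hpq
        · exact Or.inr (Subtype.ext ((key hpq).unique ⟨l₁.2, h11, h21⟩ ⟨l₂.2, h12, h22⟩))
      mkLine := fun {p q} h => ⟨(key h).exists.choose, (key h).exists.choose_spec.1⟩
      mkLine_ax := fun {p q} h =>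
        ⟨(key h).exists.choose_spec.2.1, (key h).exists.choose_spec.2.2⟩ }
  have := Configuration.HasLines.card_le (P := Fin n) (L := {A // A ∈ P})
  simpa [Fintype.card_coe] using this

theorem cp_upper (n : ℕ) (hn : 3 ≤ n) :
    ∃ P : Finset (Finset (Fin n)), IsCliquePartition n 2 P ∧ P.card = n := by
  classical
  haveI : NeZero n := ⟨by omega⟩
  set E : Finset (Fin n) := Finset.univ.erase 0 with hE
  set P : Finset (Finset (Fin n)) :=
    insert E (E.image fun x => ({0, x} : Finset (Fin n))) with hPdef
  have hEcard : E.card = n - 1 := by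
    rw [hE, Finset.card_erase_of_mem (Finset.mem_univ 0), Finset.card_univ, Fintype.card_fin]
  have hinj : Set.InjOn (fun x => ({0, x} : Finset (Fin n))) E := by
    intro x hx y hy hxy
    have hx0 : x ≠ 0 := Finset.ne_of_mem_erase hx
    have hxy' : ({0, x} : Finset (Fin n)) = {0, y} := hxy
    have : x ∈ ({0, y} : Finset (Fin n)) := hxy' ▸ (by simp : x ∈ ({0, x} : Finset (Fin n)))
    simpa [hx0] using this
  have hEnot : E ∉ E.image fun x => ({0, x} : Finset (Fin n)) := by
    intro h
    obtain ⟨x, hx, hx2⟩ := Finset.mem_image.mp h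
    have : (0 : Fin n) ∈ E := by rw [← hx2]; simp
    exact (Finset.ne_of_mem_erase this) rfl
  have hmemP : ∀ {B : Finset (Fin n)}, B ∈ P ↔ B = E ∨ ∃ x ≠ 0, B = {0, x} := by
    intro B
    simp only [hPdef, Finset.mem_insert, Finset.mem_image]
    constructor
    · rintro (rfl | ⟨x, hx, rfl⟩)
      · exact Or.inl rfl
      · exact Or.inr ⟨x, Finset.ne_of_mem_erase hx, rfl⟩
    · rintro (rfl | ⟨x, hx, rfl⟩)
      · exact Or.inl rfl
      · exact Or.inr ⟨x, by simp [hE, hx], rfl⟩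
  refine ⟨P, ⟨?_, ?_⟩, ?_⟩
  · -- proper
    intro A hA
    rcases hmemP.mp hA with rfl | ⟨x, hx, rfl⟩
    · intro h
      have : (0 : Fin n) ∈ E := h ▸ Finset.mem_univ 0
      exact (Finset.ne_of_mem_erase this) rfl
    · intro h
      have hc : ({0, x} : Finset (Fin n)).card ≤ 2 :=
        le_trans (Finset.card_insert_le _ _) (by simp)
      rw [h, Finset.card_univ, Fintype.card_fin] at hc
      omega
  · -- exactly one
    intro S hS
    obtain ⟨a, b, hab, rfl⟩ := Finset.card_eq_two.mp hS
    by_cases h0 : (0 : Fin n) ∈ ({a, b} : Finset (Fin n))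
    · -- S contains 0; write S = {0, c}
      obtain ⟨c, hc0, hSc⟩ : ∃ c, c ≠ 0 ∧ ({a, b} : Finset (Fin n)) = {0, c} := by
        simp only [Finset.mem_insert, Finset.mem_singleton] at h0
        rcases h0 with rfl | rfl
        · exact ⟨b, fun h => hab h.symm, rfl⟩
        · exact ⟨a, hab, Finset.pair_comm a 0⟩
      rw [hSc]
      refine ⟨{0, c}, ⟨hmemP.mpr (Or.inr ⟨c, hc0, rfl⟩), le_refl _⟩, ?_⟩
      rintro B ⟨hB, hsub⟩
      rcases hmemP.mp hB with rfl | ⟨x, hx, rfl⟩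
      · exact absurd (hsub (Finset.mem_insert_self 0 {c})) (by simp [hE])
      · have hcB : c ∈ ({0, x} : Finset (Fin n)) := hsub (by simp)
        simp only [Finset.mem_insert, Finset.mem_singleton] at hcB
        rcases hcB with rfl | rfl
        · exact absurd rfl hc0
        · rfl
    · -- S avoids 0
      refine ⟨E, ⟨hmemP.mpr (Or.inl rfl), ?_⟩, ?_⟩
      · intro y hy
        rw [hE, Finset.mem_erase]
        exact ⟨fun h => h0 (h ▸ hy), Finset.mem_univ y⟩
      · rintro B ⟨hB, hsub⟩
        rcases hmemP.mp hB with rfl | ⟨x, hx, rfl⟩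
        · rfl
        · exfalso
          have ha : a ∈ ({0, x} : Finset (Fin n)) := hsub (by simp)
          have hb : b ∈ ({0, x} : Finset (Fin n)) := hsub (by simp)
          have ha0 : a ≠ 0 := fun h => h0 (by simp [h])
          have hb0 : b ≠ 0 := fun h => h0 (by simp [h])
          simp only [Finset.mem_insert, Finset.mem_singleton] at ha hb
          rcases ha with rfl | rfl
          · exact ha0 rfl
          · rcases hb with rfl | rfl
            · exact hb0 rfl
            · exact hab rfl
  · -- card
    rw [hPdef, Finset.card_insert_of_notMem hEnot, Finset.card_image_of_injOn hinj, hEcard]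
    omega

/-- de Bruijn–Erdős: for every `n ≥ 3`, `cp(n, 2) = n`. -/
theorem deBruijn_Erdos (n : ℕ) (hn : 3 ≤ n) : cp n 2 = n := by
  obtain ⟨P, hP, hcard⟩ := cp_upper n hn
  have hmem : n ∈ {t | ∃ P : Finset (Finset (Fin n)), IsCliquePartition n 2 P ∧ P.card = t} :=
    ⟨P, hP, hcard⟩
  refine le_antisymm (Nat.sInf_le hmem) ?_
  refine le_csInf ⟨n, hmem⟩ ?_
  rintro t ⟨Q, hQ, rfl⟩
  exact cp_lower n hn Q hQ
end
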